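/- arXiv:2601.01465 — 6 statements merged into one kernel-verified Lean document; each statement's English description precedes it below -/
import Mathlib

section
/- Let X be an integrable random vector with values in ℝ^d, constructed as X = f(Y, U) for a measurable function f, where Y is a random variable and U is independent of Y. Let X' = f(Y, U') where U' is an independent copy of U, also independent of Y (so X and X' are conditionally i.i.d. given Y). Then E[‖X − E[X | Y]‖] ≤ E[‖X − X'‖]. -/
open MeasureTheory ProbabilityTheory

/-- If `Z` and `W` are independent, then the conditional expectation of `φ (Z, W)` given
`σ(Z)` is `fun ω => ∫ w, φ (Z ω, w) ∂(law of W)`. -/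
lemma condexp_comp_indep {Ω α β E : Type*} [MeasureSpace Ω]
    [IsProbabilityMeasure (ℙ : Measure Ω)]
    [MeasurableSpace α] [MeasurableSpace β]
    [NormedAddCommGroup E] [NormedSpace ℝ E] [CompleteSpace E]
    (Z : Ω → α) (W : Ω → β) (hZ : Measurable Z) (hW : Measurable W)
    (hind : IndepFun Z W ℙ) (φ : α × β → E) (hφ : StronglyMeasurable φ)
    (hint : Integrable (fun ω => φ (Z ω, W ω)) ℙ) :
    ℙ[(fun ω => φ (Z ω, W ω)) | MeasurableSpace.comap Z inferInstance]
      =ᵐ[ℙ] fun ω => ∫ w, φ (Z ω, w) ∂(Measure.map W ℙ) := by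
  set μ := Measure.map Z ℙ with hμ
  set ν := Measure.map W ℙ with hν
  haveI : IsProbabilityMeasure μ := Measure.isProbabilityMeasure_map hZ.aemeasurable
  haveI : IsProbabilityMeasure ν := Measure.isProbabilityMeasure_map hW.aemeasurable
  have hpair : Measurable fun ω => (Z ω, W ω) := hZ.prodMk hW
  have hmap : Measure.map (fun ω => (Z ω, W ω)) ℙ = μ.prod ν :=
    (indepFun_iff_map_prod_eq_prod_map_map hZ.aemeasurable hW.aemeasurable).mp hind
  have hφint : Integrable φ (μ.prod ν) := by
    rw [← hmap]
    exact (integrable_map_measure hφ.aestronglyMeasurable hpair.aemeasurable).mpr hint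
  have hg : StronglyMeasurable fun z => ∫ w, φ (z, w) ∂ν := hφ.integral_prod_right'
  have hgint : Integrable (fun z => ∫ w, φ (z, w) ∂ν) μ := hφint.integral_prod_left
  have hgZint : Integrable (fun ω => ∫ w, φ (Z ω, w) ∂ν) ℙ :=
    (integrable_map_measure hg.aestronglyMeasurable hZ.aemeasurable).mp hgint
  have hm : MeasurableSpace.comap Z inferInstance ≤ (inferInstance : MeasurableSpace Ω) :=
    hZ.comap_le
  haveI : SigmaFinite ((ℙ : Measure Ω).trim hm) := by
    haveI := isFiniteMeasure_trim (μ := (ℙ : Measure Ω)) hm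
    infer_instance
  refine (ae_eq_condExp_of_forall_setIntegral_eq hm hint
    (fun s _ _ => hgZint.integrableOn) (fun s hs _ => ?_) ?_).symm
  · obtain ⟨t, ht, rfl⟩ := hs
    have h1 : ∫ ω in Z ⁻¹' t, ∫ w, φ (Z ω, w) ∂ν ∂ℙ = ∫ z in t, ∫ w, φ (z, w) ∂ν ∂μ :=
      (setIntegral_map ht hg.aestronglyMeasurable hZ.aemeasurable).symm
    have h2 : Integrable φ ((μ.restrict t).prod ν) := by
      rw [Measure.restrict_prod_eq_prod_univ]
      exact hφint.restrict
    have h3 : ∫ z in t, ∫ w, φ (z, w) ∂ν ∂μ = ∫ p in t ×ˢ Set.univ, φ p ∂(μ.prod ν) := by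
      rw [← Measure.restrict_prod_eq_prod_univ]
      exact (integral_prod φ h2).symm
    have hpre : (fun ω => (Z ω, W ω)) ⁻¹' (t ×ˢ Set.univ) = Z ⁻¹' t := by
      ext ω; simp
    have h4 : ∫ p in t ×ˢ Set.univ, φ p ∂(μ.prod ν)
        = ∫ ω in Z ⁻¹' t, φ (Z ω, W ω) ∂ℙ := by
      rw [← hmap, setIntegral_map (ht.prod MeasurableSet.univ) hφ.aestronglyMeasurable
        hpair.aemeasurable, hpre]
    rw [h1, h3, h4]
  · have hZm : Measurable[MeasurableSpace.comap Z inferInstance] Z := fun s hs => ⟨s, hs, rfl⟩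
    exact (hg.comp_measurable hZm).aestronglyMeasurable

/-- If `X = f(Y, U)` with `U` independent of `Y`, and `X' = f(Y, U')` where `U'` is an
independent copy of `U` (independent of `(Y, U)` jointly), so that `X` and `X'` are
conditionally i.i.d. given `Y`, then `E[‖X − E[X | Y]‖] ≤ E[‖X − X'‖]`. -/
theorem expected_distance_to_center
    {d : ℕ} {Ω 𝒴 𝒰 : Type*} [MeasureSpace Ω] [IsProbabilityMeasure (ℙ : Measure Ω)]
    [MeasurableSpace 𝒴] [MeasurableSpace 𝒰]
    (Y : Ω → 𝒴) (U U' : Ω → 𝒰) (f : 𝒴 × 𝒰 → EuclideanSpace ℝ (Fin d))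
    (hY : Measurable Y) (hU : Measurable U) (hU' : Measurable U') (hf : Measurable f)
    (X X' : Ω → EuclideanSpace ℝ (Fin d))
    (hX : X = fun ω => f (Y ω, U ω)) (hX' : X' = fun ω => f (Y ω, U' ω))
    (hYU : IndepFun Y U ℙ)
    (hU'indep : IndepFun (fun ω => (Y ω, U ω)) U' ℙ)
    (hcopy : Measure.map U' ℙ = Measure.map U ℙ)
    (hXint : Integrable X ℙ) (hX'int : Integrable X' ℙ) :
    ∫ ω, ‖X ω - (ℙ[X | MeasurableSpace.comap Y inferInstance]) ω‖ ∂ℙ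
      ≤ ∫ ω, ‖X ω - X' ω‖ ∂ℙ := by
  subst hX hX'
  set ν := Measure.map U ℙ with hν
  set μ := Measure.map Y ℙ with hμ
  haveI : IsProbabilityMeasure μ := Measure.isProbabilityMeasure_map hY.aemeasurable
  haveI : IsProbabilityMeasure ν := Measure.isProbabilityMeasure_map hU.aemeasurable
  set g : 𝒴 → EuclideanSpace ℝ (Fin d) := fun y => ∫ u, f (y, u) ∂ν with hgdef
  have hcond := condexp_comp_indep Y U hY hU hYU f hf.stronglyMeasurable hXint
  have hpairYU : Measurable fun ω => (Y ω, U ω) := hY.prodMk hU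
  have hT : Measurable fun ω => ((Y ω, U ω), U' ω) := hpairYU.prodMk hU'
  have hmapYU : Measure.map (fun ω => (Y ω, U ω)) ℙ = μ.prod ν :=
    (indepFun_iff_map_prod_eq_prod_map_map hY.aemeasurable hU.aemeasurable).mp hYU
  have hmapT : Measure.map (fun ω => ((Y ω, U ω), U' ω)) ℙ = (μ.prod ν).prod ν := by
    rw [(indepFun_iff_map_prod_eq_prod_map_map hpairYU.aemeasurable hU'.aemeasurable).mp
      hU'indep, hmapYU, hcopy]
  have hgmeas : StronglyMeasurable g := hf.stronglyMeasurable.integral_prod_right'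
  have hF1 : StronglyMeasurable fun p : 𝒴 × 𝒰 => ‖f p - g p.1‖ :=
    (hf.stronglyMeasurable.sub (hgmeas.comp_measurable measurable_fst)).norm
  have hH : StronglyMeasurable fun q : (𝒴 × 𝒰) × 𝒰 => ‖f q.1 - f (q.1.1, q.2)‖ :=
    ((hf.stronglyMeasurable.comp_measurable measurable_fst).sub
      (hf.stronglyMeasurable.comp_measurable (measurable_fst.fst.prodMk measurable_snd))).norm
  have hfint : Integrable f (μ.prod ν) := by
    rw [← hmapYU]
    exact (integrable_map_measure hf.aestronglyMeasurable hpairYU.aemeasurable).mpr hXint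
  have hgintμ : Integrable g μ := hfint.integral_prod_left
  have hmpfst : MeasurePreserving (Prod.fst : 𝒴 × 𝒰 → 𝒴) (μ.prod ν) μ :=
    ⟨measurable_fst, by simp⟩
  have hgfst : Integrable (fun p : 𝒴 × 𝒰 => g p.1) (μ.prod ν) :=
    (hmpfst.integrable_comp hgmeas.aestronglyMeasurable).mpr hgintμ
  have hA : Integrable (fun p : 𝒴 × 𝒰 => ‖f p - g p.1‖) (μ.prod ν) := (hfint.sub hgfst).norm
  have hHint : Integrable (fun q : (𝒴 × 𝒰) × 𝒰 => ‖f q.1 - f (q.1.1, q.2)‖)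
      ((μ.prod ν).prod ν) := by
    rw [← hmapT]
    exact (integrable_map_measure hH.aestronglyMeasurable hT.aemeasurable).mpr
      (hXint.sub hX'int).norm
  have hB : Integrable (fun p : 𝒴 × 𝒰 => ∫ w, ‖f p - f (p.1, w)‖ ∂ν) (μ.prod ν) :=
    hHint.integral_prod_left
  have hae1 : ∀ᵐ z ∂μ, Integrable (fun w => f (z, w)) ν := hfint.prod_right_ae
  have hae2 : ∀ᵐ p ∂(μ.prod ν), Integrable (fun w => f (p.1, w)) ν :=
    Measure.quasiMeasurePreserving_fst.ae hae1
  have hptwise : ∀ᵐ p ∂(μ.prod ν), ‖f p - g p.1‖ ≤ ∫ w, ‖f p - f (p.1, w)‖ ∂ν := by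
    filter_upwards [hae2] with p hp
    have h0 : f p - g p.1 = ∫ w, (f p - f (p.1, w)) ∂ν := by
      rw [integral_sub (integrable_const _) hp, integral_const, probReal_univ,
        one_smul]
    rw [h0]
    exact norm_integral_le_integral_norm _
  have e1 : ∫ ω, ‖f (Y ω, U ω) -
      (ℙ[(fun ω => f (Y ω, U ω)) | MeasurableSpace.comap Y inferInstance]) ω‖ ∂ℙ
      = ∫ ω, ‖f (Y ω, U ω) - g (Y ω)‖ ∂ℙ :=
    integral_congr_ae (by filter_upwards [hcond] with ω h; rw [h])
  have e2 : ∫ ω, ‖f (Y ω, U ω) - g (Y ω)‖ ∂ℙ = ∫ p, ‖f p - g p.1‖ ∂(μ.prod ν) := by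
    rw [← hmapYU]
    exact (integral_map hpairYU.aemeasurable hF1.aestronglyMeasurable).symm
  have e3 : ∫ q, ‖f q.1 - f (q.1.1, q.2)‖ ∂((μ.prod ν).prod ν)
      = ∫ ω, ‖f (Y ω, U ω) - f (Y ω, U' ω)‖ ∂ℙ := by
    rw [← hmapT]
    exact integral_map hT.aemeasurable hH.aestronglyMeasurable
  have e4 : ∫ q, ‖f q.1 - f (q.1.1, q.2)‖ ∂((μ.prod ν).prod ν)
      = ∫ p, ∫ w, ‖f p - f (p.1, w)‖ ∂ν ∂(μ.prod ν) :=
    integral_prod _ hHint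
  calc ∫ ω, ‖f (Y ω, U ω) -
      (ℙ[(fun ω => f (Y ω, U ω)) | MeasurableSpace.comap Y inferInstance]) ω‖ ∂ℙ
      = ∫ p, ‖f p - g p.1‖ ∂(μ.prod ν) := e1.trans e2
    _ ≤ ∫ p, ∫ w, ‖f p - f (p.1, w)‖ ∂ν ∂(μ.prod ν) := integral_mono_ae hA hB hptwise
    _ = ∫ q, ‖f q.1 - f (q.1.1, q.2)‖ ∂((μ.prod ν).prod ν) := e4.symm
    _ = ∫ ω, ‖f (Y ω, U ω) - f (Y ω, U' ω)‖ ∂ℙ := e3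
end

section
/- Let f : ℝ^d → ℝ be nonnegative, differentiable, and β-smooth, i.e. ‖∇f(w) − ∇f(w')‖ ≤ β‖w − w'‖ for all w, w' ∈ ℝ^d, where β > 0. Then for every γ > 0 and every w, g ∈ ℝ^d, |f(w + g) − f(w)| ≤ (β/γ) · f(w) + ((β + γ)/2) · ‖g‖². -/
open MeasureTheory

section aux

variable {d : ℕ}

private lemma fderiv_apply_eq_inner_gradient (f : EuclideanSpace ℝ (Fin d) → ℝ)
    (y v : EuclideanSpace ℝ (Fin d)) :
    fderiv ℝ f y v = inner ℝ (gradient f y) v := by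
  rw [gradient, ← InnerProductSpace.toDual_apply_apply, LinearIsometryEquiv.apply_symm_apply]

private lemma descent_lemma (f : EuclideanSpace ℝ (Fin d) → ℝ) (β : ℝ)
    (hdiff : Differentiable ℝ f)
    (hsmooth : ∀ w w' : EuclideanSpace ℝ (Fin d),
      ‖gradient f w - gradient f w'‖ ≤ β * ‖w - w'‖)
    (x v : EuclideanSpace ℝ (Fin d)) :
    |f (x + v) - f x - inner ℝ (gradient f x) v| ≤ β / 2 * ‖v‖ ^ 2 := by
  have hgradcont : Continuous (gradient f) := by
    rcases le_or_gt β 0 with hβ | hβ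
    · have hc : ∀ w w', gradient f w = gradient f w' := by
        intro w w'
        have h1 := (hsmooth w w').trans
          (mul_nonpos_of_nonpos_of_nonneg hβ (norm_nonneg _))
        have h2 := le_antisymm h1 (norm_nonneg _)
        rwa [norm_eq_zero, sub_eq_zero] at h2
      have : gradient f = fun _ => gradient f 0 := funext fun w => hc w 0
      rw [this]; exact continuous_const
    · exact (LipschitzWith.of_dist_le_mul (K := ⟨β, hβ.le⟩) (fun w w' => by
        rw [dist_eq_norm, dist_eq_norm]; exact hsmooth w w')).continuous
  have hderiv : ∀ t : ℝ, HasDerivAt (fun t : ℝ => f (x + t • v))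
      (inner ℝ (gradient f (x + t • v)) v : ℝ) t := by
    intro t
    have h1 : HasDerivAt (fun t : ℝ => x + t • v) v t := by
      simpa using ((hasDerivAt_id t).smul_const v).const_add x
    have h2 := ((hdiff (x + t • v)).hasFDerivAt).comp_hasDerivAt t h1
    rw [fderiv_apply_eq_inner_gradient] at h2; exact h2
  have hcont : Continuous fun t : ℝ => (inner ℝ (gradient f (x + t • v)) v : ℝ) :=
    continuous_inner.comp ((hgradcont.comp (by continuity)).prodMk continuous_const)
  have hint : IntervalIntegrable (fun t : ℝ => (inner ℝ (gradient f (x + t • v)) v : ℝ))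
      volume 0 1 := hcont.intervalIntegrable 0 1
  have heq : ∫ t in (0:ℝ)..1, (inner ℝ (gradient f (x + t • v)) v : ℝ) = f (x + v) - f x := by
    have := intervalIntegral.integral_eq_sub_of_hasDerivAt
      (f := fun t : ℝ => f (x + t • v)) (fun t _ => hderiv t) hint
    simpa using this
  have hsplit : f (x + v) - f x - inner ℝ (gradient f x) v
      = ∫ t in (0:ℝ)..1, ((inner ℝ (gradient f (x + t • v)) v : ℝ) - inner ℝ (gradient f x) v) := by
    rw [intervalIntegral.integral_sub hint intervalIntegrable_const, heq]
    simp
  rw [hsplit]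
  have hbound : ∀ t ∈ Set.Icc (0:ℝ) 1,
      |(inner ℝ (gradient f (x + t • v)) v : ℝ) - inner ℝ (gradient f x) v|
        ≤ (β * ‖v‖ ^ 2) * t := by
    intro t ht
    have h1 : (inner ℝ (gradient f (x + t • v)) v : ℝ) - inner ℝ (gradient f x) v
        = inner ℝ (gradient f (x + t • v) - gradient f x) v := by rw [inner_sub_left]
    rw [h1]
    calc |(inner ℝ (gradient f (x + t • v) - gradient f x) v : ℝ)|
        ≤ ‖gradient f (x + t • v) - gradient f x‖ * ‖v‖ := abs_real_inner_le_norm _ _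
      _ ≤ (β * ‖(x + t • v) - x‖) * ‖v‖ := by gcongr; exact hsmooth _ _
      _ = (β * ‖v‖ ^ 2) * t := by
          rw [add_sub_cancel_left, norm_smul, Real.norm_eq_abs, abs_of_nonneg ht.1]
          ring
  calc |∫ t in (0:ℝ)..1, ((inner ℝ (gradient f (x + t • v)) v : ℝ) - inner ℝ (gradient f x) v)|
      ≤ ∫ t in (0:ℝ)..1, |(inner ℝ (gradient f (x + t • v)) v : ℝ) - inner ℝ (gradient f x) v| :=
        intervalIntegral.abs_integral_le_integral_abs zero_le_one
    _ ≤ ∫ t in (0:ℝ)..1, (β * ‖v‖ ^ 2) * t := by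
        apply intervalIntegral.integral_mono_on zero_le_one
        · exact (hint.sub intervalIntegrable_const).abs
        · exact ((continuous_const.mul continuous_id).intervalIntegrable 0 1)
        · exact hbound
    _ = β / 2 * ‖v‖ ^ 2 := by
        rw [intervalIntegral.integral_const_mul, integral_id]
        ring

private lemma grad_sq_le (f : EuclideanSpace ℝ (Fin d) → ℝ) (β : ℝ) (hβ : 0 < β)
    (hnonneg : ∀ w, 0 ≤ f w)
    (hdiff : Differentiable ℝ f)
    (hsmooth : ∀ w w' : EuclideanSpace ℝ (Fin d),
      ‖gradient f w - gradient f w'‖ ≤ β * ‖w - w'‖)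
    (w : EuclideanSpace ℝ (Fin d)) :
    ‖gradient f w‖ ^ 2 ≤ 2 * β * f w := by
  set v : EuclideanSpace ℝ (Fin d) := -(β⁻¹ • gradient f w) with hv
  have hd := descent_lemma f β hdiff hsmooth w v
  have hiv : (inner ℝ (gradient f w) v : ℝ) = -(β⁻¹ * ‖gradient f w‖ ^ 2) := by
    rw [hv, inner_neg_right, real_inner_smul_right, real_inner_self_eq_norm_sq]
  have hnv : ‖v‖ ^ 2 = β⁻¹ ^ 2 * ‖gradient f w‖ ^ 2 := by
    rw [hv, norm_neg, norm_smul, mul_pow, Real.norm_eq_abs, sq_abs]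
  have h1 : f (w + v) - f w - inner ℝ (gradient f w) v ≤ β / 2 * ‖v‖ ^ 2 :=
    (abs_le.mp hd).2
  have h2 : 0 ≤ f (w + v) := hnonneg _
  rw [hiv, hnv] at h1
  have hβ' : β ≠ 0 := hβ.ne'
  have e1 : β / 2 * (β⁻¹ ^ 2 * ‖gradient f w‖ ^ 2) = β⁻¹ * ‖gradient f w‖ ^ 2 / 2 := by
    field_simp
  rw [e1] at h1
  have h4 : β⁻¹ * ‖gradient f w‖ ^ 2 ≤ 2 * f w := by linarith
  have h5 := mul_le_mul_of_nonneg_left h4 hβ.le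
  rw [← mul_assoc, mul_inv_cancel₀ hβ', one_mul] at h5
  linarith

end aux

/-- If `f : ℝ^d → ℝ` is nonnegative, differentiable and `β`-smooth, then for every `γ > 0`
and all `w, g`, `|f(w + g) − f(w)| ≤ (β/γ)·f(w) + ((β + γ)/2)·‖g‖²`. -/
theorem perturbation_penalty_of_nonneg_smooth
    {d : ℕ} (f : EuclideanSpace ℝ (Fin d) → ℝ) (β : ℝ) (hβ : 0 < β)
    (hnonneg : ∀ w, 0 ≤ f w)
    (hdiff : Differentiable ℝ f)
    (hsmooth : ∀ w w' : EuclideanSpace ℝ (Fin d),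
      ‖gradient f w - gradient f w'‖ ≤ β * ‖w - w'‖) :
    ∀ γ : ℝ, 0 < γ → ∀ w g : EuclideanSpace ℝ (Fin d),
      |f (w + g) - f w| ≤ (β / γ) * f w + ((β + γ) / 2) * ‖g‖ ^ 2 := by
  intro γ hγ w g
  have hd := descent_lemma f β hdiff hsmooth w g
  have hgsq := grad_sq_le f β hβ hnonneg hdiff hsmooth w
  have hinner : |(inner ℝ (gradient f w) g : ℝ)| ≤ ‖gradient f w‖ * ‖g‖ :=
    abs_real_inner_le_norm _ _
  have h1 : |f (w + g) - f w| ≤ |(inner ℝ (gradient f w) g : ℝ)| + β / 2 * ‖g‖ ^ 2 := by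
    have := abs_sub_abs_le_abs_sub (f (w + g) - f w) (inner ℝ (gradient f w) g)
    calc |f (w + g) - f w|
        ≤ |(inner ℝ (gradient f w) g : ℝ)| + |f (w + g) - f w - inner ℝ (gradient f w) g| := by
          have := abs_add_le (inner ℝ (gradient f w) g : ℝ)
            (f (w + g) - f w - inner ℝ (gradient f w) g)
          simpa [add_sub_cancel] using this
      _ ≤ |(inner ℝ (gradient f w) g : ℝ)| + β / 2 * ‖g‖ ^ 2 := by linarith
  have hyoung : ‖gradient f w‖ * ‖g‖ ≤ ‖gradient f w‖ ^ 2 / (2 * γ) + γ / 2 * ‖g‖ ^ 2 := by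
    rw [← sub_nonneg]
    have hkey : ‖gradient f w‖ ^ 2 / (2 * γ) + γ / 2 * ‖g‖ ^ 2 - ‖gradient f w‖ * ‖g‖
        = (‖gradient f w‖ - γ * ‖g‖) ^ 2 / (2 * γ) := by field_simp; ring
    rw [hkey]
    positivity
  have hfw : ‖gradient f w‖ ^ 2 / (2 * γ) ≤ (β / γ) * f w := by
    rw [div_le_iff₀ (by linarith : (0:ℝ) < 2 * γ)]
    calc ‖gradient f w‖ ^ 2 ≤ 2 * β * f w := hgsq
      _ = β / γ * f w * (2 * γ) := by field_simp
  linarith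
end

section
/- Let W = A(S, V) ∈ ℝ^d be the integrable output of a (possibly randomized) learning algorithm A applied to the training set S with internal randomness V independent of S. Assume that for every z ∈ Z the map w ↦ ℓ(w, z) is L-Lipschitz, and that all losses appearing below are integrable. Then gen ≤ (2L/n) · Σ_{i=1}^n E[‖W − E[W | Z_{−i}]‖], where Z_{−i} = (Z_1, …, Z_{i−1}, Z_{i+1}, …, Z_n) and E[W | Z_{−i}] is the conditional expectation of W given Z_{−i}. -/
open MeasureTheory ProbabilityTheory
open scoped NNReal

/-- Generalization bound via conditional expectations: if the loss `ℓ(·, z)` is `L`-Lipschitz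
for every `z` and `W = A(S, V)` is the integrable output of a (possibly randomized) algorithm
with internal randomness `V` independent of the i.i.d. sample `S = (Z_1, …, Z_n)`, then
`gen ≤ (2L/n) · Σ_i E[‖W − E[W | Z_{−i}]‖]`. -/
theorem gen_le_conditional_stability
    {d n : ℕ} (hn : 0 < n) {Ω 𝒵 𝒱 : Type*}
    [MeasureSpace Ω] [IsProbabilityMeasure (ℙ : Measure Ω)]
    [MeasurableSpace 𝒵] [StandardBorelSpace 𝒵] [MeasurableSpace 𝒱]
    (μ : Measure 𝒵) [IsProbabilityMeasure μ]
    (Z : Fin n → Ω → 𝒵) (hZmeas : ∀ i, Measurable (Z i))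
    (hiid : iIndepFun Z ℙ)
    (hlaw : ∀ i, Measure.map (Z i) ℙ = μ)
    (V : Ω → 𝒱) (hVmeas : Measurable V)
    (hVindep : IndepFun (fun ω => fun i => Z i ω) V ℙ)
    (A : (Fin n → 𝒵) → 𝒱 → EuclideanSpace ℝ (Fin d))
    (hA : Measurable (fun p : (Fin n → 𝒵) × 𝒱 => A p.1 p.2))
    (W : Ω → EuclideanSpace ℝ (Fin d))
    (hW : W = fun ω => A (fun i => Z i ω) (V ω))
    (hWint : Integrable W ℙ)
    (ℓ : EuclideanSpace ℝ (Fin d) → 𝒵 → ℝ) (L : ℝ≥0)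
    (hℓmeas : Measurable (fun p : EuclideanSpace ℝ (Fin d) × 𝒵 => ℓ p.1 p.2))
    (hLip : ∀ z, LipschitzWith L (fun w => ℓ w z))
    (hint_emp : ∀ i, Integrable (fun ω => ℓ (W ω) (Z i ω)) ℙ)
    (hint_pop : Integrable (fun ω => ∫ z, ℓ (W ω) z ∂μ) ℙ)
    (hint_loss : ∀ w, Integrable (fun z => ℓ w z) μ) :
    (∫ ω, ∫ z, ℓ (W ω) z ∂μ ∂ℙ) - (∫ ω, (n : ℝ)⁻¹ * ∑ i, ℓ (W ω) (Z i ω) ∂ℙ)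
      ≤ (2 * (L : ℝ) / n) * ∑ i : Fin n,
          ∫ ω, ‖W ω -
            (ℙ[W | MeasurableSpace.comap
                (fun ω (j : {j : Fin n // j ≠ i}) => Z j.1 ω) inferInstance]) ω‖ ∂ℙ := by
  classical
  have hn' : (0 : ℝ) < n := by exact_mod_cast hn
  have h_le : ∀ j, MeasurableSpace.comap (Z j) inferInstance
      ≤ (inferInstance : MeasurableSpace Ω) := fun j =>
    measurable_iff_comap_le.mp (hZmeas j)
  have hPop_sm : StronglyMeasurable (fun w : EuclideanSpace ℝ (Fin d) => ∫ z, ℓ w z ∂μ) :=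
    (hℓmeas.stronglyMeasurable).integral_prod_right'
  have key : ∀ i : Fin n,
      (∫ ω, ∫ z, ℓ (W ω) z ∂μ ∂ℙ) - ∫ ω, ℓ (W ω) (Z i ω) ∂ℙ
        ≤ 2 * (L : ℝ) *
          ∫ ω, ‖W ω -
            (ℙ[W | MeasurableSpace.comap
                (fun ω (j : {j : Fin n // j ≠ i}) => Z j.1 ω) inferInstance]) ω‖ ∂ℙ := by
    intro i
    set Wi : Ω → EuclideanSpace ℝ (Fin d) :=
      ℙ[W | MeasurableSpace.comap
        (fun ω (j : {j : Fin n // j ≠ i}) => Z j.1 ω) inferInstance] with hWidef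
    have hjoint_meas : Measurable (fun ω (j : {j : Fin n // j ≠ i}) => Z j.1 ω) :=
      measurable_pi_lambda _ fun j => hZmeas j.1
    have hm : MeasurableSpace.comap
        (fun ω (j : {j : Fin n // j ≠ i}) => Z j.1 ω) inferInstance
        ≤ (inferInstance : MeasurableSpace Ω) :=
      measurable_iff_comap_le.mp hjoint_meas
    have hm_eq : MeasurableSpace.comap
        (fun ω (j : {j : Fin n // j ≠ i}) => Z j.1 ω) inferInstance
        = ⨆ j ∈ ({i}ᶜ : Set (Fin n)), MeasurableSpace.comap (Z j) inferInstance := by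
      have hpi : (inferInstance : MeasurableSpace ({j : Fin n // j ≠ i} → 𝒵))
          = ⨆ j : {j : Fin n // j ≠ i},
              MeasurableSpace.comap (fun f => f j) inferInstance := rfl
      rw [hpi, MeasurableSpace.comap_iSup]
      simp only [MeasurableSpace.comap_comp]
      rw [iSup_subtype]
      simp only [Set.mem_compl_iff, Set.mem_singleton_iff]
      rfl
    have hIndep_m : Indep (MeasurableSpace.comap
          (fun ω (j : {j : Fin n // j ≠ i}) => Z j.1 ω) inferInstance)
        (MeasurableSpace.comap (Z i) inferInstance) ℙ := by
      have h := (indep_biSup_compl h_le hiid.iIndep {i}).symm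
      rw [← hm_eq] at h
      have hsing : (⨆ j ∈ ({i} : Set (Fin n)),
          MeasurableSpace.comap (Z j) inferInstance)
          = MeasurableSpace.comap (Z i) inferInstance := by simp
      rwa [hsing] at h
    have hWi_smm : StronglyMeasurable[MeasurableSpace.comap
        (fun ω (j : {j : Fin n // j ≠ i}) => Z j.1 ω) inferInstance] Wi :=
      stronglyMeasurable_condExp
    have hWi_meas : Measurable Wi := (hWi_smm.mono hm).measurable
    have hWi_int : Integrable Wi ℙ := integrable_condExp
    have hIndepFun : IndepFun Wi (Z i) ℙ :=
      indep_of_indep_of_le_left hIndep_m (measurable_iff_comap_le.mp hWi_smm.measurable)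
    have hnorm_int : Integrable (fun ω => ‖W ω - Wi ω‖) ℙ := (hWint.sub hWi_int).norm
    -- pointwise Lipschitz bounds
    have hpt : ∀ (ω : Ω) (z : 𝒵), |ℓ (W ω) z - ℓ (Wi ω) z| ≤ (L : ℝ) * ‖W ω - Wi ω‖ := by
      intro ω z
      have := (hLip z).dist_le_mul (W ω) (Wi ω)
      rwa [Real.dist_eq, dist_eq_norm] at this
    have hpt_pop : ∀ ω : Ω,
        |(∫ z, ℓ (W ω) z ∂μ) - ∫ z, ℓ (Wi ω) z ∂μ| ≤ (L : ℝ) * ‖W ω - Wi ω‖ := by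
      intro ω
      rw [← integral_sub (hint_loss (W ω)) (hint_loss (Wi ω))]
      calc |∫ z, (ℓ (W ω) z - ℓ (Wi ω) z) ∂μ|
          ≤ ∫ z, |ℓ (W ω) z - ℓ (Wi ω) z| ∂μ := by
            simpa [Real.norm_eq_abs] using
              norm_integral_le_integral_norm (μ := μ) (fun z => ℓ (W ω) z - ℓ (Wi ω) z)
        _ ≤ ∫ _z, (L : ℝ) * ‖W ω - Wi ω‖ ∂μ :=
            integral_mono ((hint_loss (W ω)).sub (hint_loss (Wi ω))).abs
              (integrable_const _) (fun z => hpt ω z)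
        _ = (L : ℝ) * ‖W ω - Wi ω‖ := by simp
    -- measurability of composed losses
    have hWiZ_meas : Measurable (fun ω => ℓ (Wi ω) (Z i ω)) :=
      hℓmeas.comp (hWi_meas.prodMk (hZmeas i))
    have hWiPop_sm : StronglyMeasurable (fun ω => ∫ z, ℓ (Wi ω) z ∂μ) :=
      hPop_sm.comp_measurable hWi_meas
    -- integrability of the losses at Wi
    have hWiZ_int : Integrable (fun ω => ℓ (Wi ω) (Z i ω)) ℙ := by
      have hsm : AEStronglyMeasurable
          (fun ω => ℓ (Wi ω) (Z i ω) - ℓ (W ω) (Z i ω)) ℙ :=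
        (AEStronglyMeasurable.sub (g := fun ω => ℓ (W ω) (Z i ω))
          hWiZ_meas.aestronglyMeasurable (hint_emp i).1).congr
          (Filter.Eventually.of_forall fun ω => rfl)
      have hg : Integrable (fun ω => ℓ (Wi ω) (Z i ω) - ℓ (W ω) (Z i ω)) ℙ := by
        refine Integrable.mono' (hnorm_int.const_mul (L : ℝ)) hsm ?_
        filter_upwards with ω
        rw [Real.norm_eq_abs, abs_sub_comm]
        exact hpt ω (Z i ω)
      have heq : (fun ω => ℓ (Wi ω) (Z i ω))
          = fun ω => ℓ (W ω) (Z i ω) + (ℓ (Wi ω) (Z i ω) - ℓ (W ω) (Z i ω)) := by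
        funext ω; ring
      rw [heq]; exact (hint_emp i).add hg
    have hWiPop_int : Integrable (fun ω => ∫ z, ℓ (Wi ω) z ∂μ) ℙ := by
      have hsm : AEStronglyMeasurable
          (fun ω => (∫ z, ℓ (Wi ω) z ∂μ) - ∫ z, ℓ (W ω) z ∂μ) ℙ :=
        (AEStronglyMeasurable.sub (g := fun ω => ∫ z, ℓ (W ω) z ∂μ)
          hWiPop_sm.aestronglyMeasurable hint_pop.1).congr
          (Filter.Eventually.of_forall fun ω => rfl)
      have hg : Integrable
          (fun ω => (∫ z, ℓ (Wi ω) z ∂μ) - ∫ z, ℓ (W ω) z ∂μ) ℙ := by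
        refine Integrable.mono' (hnorm_int.const_mul (L : ℝ)) hsm ?_
        filter_upwards with ω
        rw [Real.norm_eq_abs, abs_sub_comm]
        exact hpt_pop ω
      have heq : (fun ω => ∫ z, ℓ (Wi ω) z ∂μ)
          = fun ω => (∫ z, ℓ (W ω) z ∂μ)
              + ((∫ z, ℓ (Wi ω) z ∂μ) - ∫ z, ℓ (W ω) z ∂μ) := by
        funext ω; ring
      rw [heq]; exact hint_pop.add hg
    -- decoupling identity : E[ℓ(Wi, Z i)] = E[∫ ℓ(Wi, z) dμ]
    have hdecouple : ∫ ω, ℓ (Wi ω) (Z i ω) ∂ℙ = ∫ ω, ∫ z, ℓ (Wi ω) z ∂μ ∂ℙ := by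
      have hpair : AEMeasurable (fun ω => (Wi ω, Z i ω)) ℙ :=
        (hWi_meas.prodMk (hZmeas i)).aemeasurable
      have hmap : Measure.map (fun ω => (Wi ω, Z i ω)) ℙ
          = (Measure.map Wi ℙ).prod μ := by
        rw [← hlaw i]
        exact (indepFun_iff_map_prod_eq_prod_map_map hWi_meas.aemeasurable
          (hZmeas i).aemeasurable).mp hIndepFun
      have : IsProbabilityMeasure (Measure.map Wi ℙ) :=
        Measure.isProbabilityMeasure_map hWi_meas.aemeasurable
      have hℓ_asm : AEStronglyMeasurable (fun p : EuclideanSpace ℝ (Fin d) × 𝒵 => ℓ p.1 p.2)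
          (Measure.map (fun ω => (Wi ω, Z i ω)) ℙ) := hℓmeas.aestronglyMeasurable
      have h1 : ∫ ω, ℓ (Wi ω) (Z i ω) ∂ℙ
          = ∫ p : EuclideanSpace ℝ (Fin d) × 𝒵, ℓ p.1 p.2
              ∂(Measure.map (fun ω => (Wi ω, Z i ω)) ℙ) :=
        (integral_map hpair hℓ_asm).symm
      have hint_prod : Integrable (fun p : EuclideanSpace ℝ (Fin d) × 𝒵 => ℓ p.1 p.2)
          ((Measure.map Wi ℙ).prod μ) := by
        rw [← hmap]
        exact (integrable_map_measure hℓ_asm hpair).mpr hWiZ_int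
      rw [h1, hmap, integral_prod _ hint_prod,
        integral_map hWi_meas.aemeasurable hPop_sm.aestronglyMeasurable]
    -- the two Lipschitz estimates at the level of expectations
    have hA1 : (∫ ω, ∫ z, ℓ (W ω) z ∂μ ∂ℙ) - (∫ ω, ∫ z, ℓ (Wi ω) z ∂μ ∂ℙ)
        ≤ (L : ℝ) * ∫ ω, ‖W ω - Wi ω‖ ∂ℙ := by
      rw [← integral_sub hint_pop hWiPop_int, ← integral_const_mul]
      exact integral_mono (hint_pop.sub hWiPop_int) (hnorm_int.const_mul _)
        (fun ω => (le_abs_self _).trans (hpt_pop ω))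
    have hA2 : (∫ ω, ℓ (Wi ω) (Z i ω) ∂ℙ) - (∫ ω, ℓ (W ω) (Z i ω) ∂ℙ)
        ≤ (L : ℝ) * ∫ ω, ‖W ω - Wi ω‖ ∂ℙ := by
      rw [← integral_sub hWiZ_int (hint_emp i), ← integral_const_mul]
      refine integral_mono (hWiZ_int.sub (hint_emp i)) (hnorm_int.const_mul _) (fun ω => ?_)
      have h2 : ℓ (Wi ω) (Z i ω) - ℓ (W ω) (Z i ω)
          ≤ |ℓ (W ω) (Z i ω) - ℓ (Wi ω) (Z i ω)| := by
        rw [abs_sub_comm]; exact le_abs_self _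
      exact h2.trans (hpt ω (Z i ω))
    linarith [hA1, hA2, hdecouple]
  -- combine the per-coordinate bounds
  have hsum : ∫ ω, (n : ℝ)⁻¹ * ∑ i, ℓ (W ω) (Z i ω) ∂ℙ
      = (n : ℝ)⁻¹ * ∑ i : Fin n, ∫ ω, ℓ (W ω) (Z i ω) ∂ℙ := by
    rw [integral_const_mul, integral_finset_sum _ (fun i _ => hint_emp i)]
  rw [hsum]
  have hstep : (∫ ω, ∫ z, ℓ (W ω) z ∂μ ∂ℙ)
      - (n : ℝ)⁻¹ * ∑ i : Fin n, ∫ ω, ℓ (W ω) (Z i ω) ∂ℙ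
      = (n : ℝ)⁻¹ * ∑ i : Fin n,
          ((∫ ω, ∫ z, ℓ (W ω) z ∂μ ∂ℙ) - ∫ ω, ℓ (W ω) (Z i ω) ∂ℙ) := by
    rw [Finset.sum_sub_distrib, Finset.sum_const, Finset.card_univ, Fintype.card_fin,
      nsmul_eq_mul, mul_sub, ← mul_assoc, inv_mul_cancel₀ hn'.ne', one_mul]
  rw [hstep]
  calc (n : ℝ)⁻¹ * ∑ i : Fin n,
        ((∫ ω, ∫ z, ℓ (W ω) z ∂μ ∂ℙ) - ∫ ω, ℓ (W ω) (Z i ω) ∂ℙ)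
      ≤ (n : ℝ)⁻¹ * ∑ i : Fin n, (2 * (L : ℝ) *
          ∫ ω, ‖W ω -
            (ℙ[W | MeasurableSpace.comap
                (fun ω (j : {j : Fin n // j ≠ i}) => Z j.1 ω) inferInstance]) ω‖ ∂ℙ) :=
        mul_le_mul_of_nonneg_left (Finset.sum_le_sum fun i _ => key i) (by positivity)
    _ = (2 * (L : ℝ) / n) * ∑ i : Fin n,
          ∫ ω, ‖W ω -
            (ℙ[W | MeasurableSpace.comap
                (fun ω (j : {j : Fin n // j ≠ i}) => Z j.1 ω) inferInstance]) ω‖ ∂ℙ := by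
        rw [← Finset.mul_sum]; ring
end

section
/- Let W = A(S, V) ∈ ℝ^d be the integrable output of a (possibly randomized) learning algorithm A applied to the training set S with internal randomness V independent of S. Let S' = (Z'_1, …, Z'_n) be an independent i.i.d. copy of S, and for each i let S^{(i)} denote S with its i-th sample Z_i replaced by Z'_i. Assume that for every z ∈ Z the map w ↦ ℓ(w, z) is L-Lipschitz, and that all losses appearing below are integrable. Then gen ≤ (2L/n) · Σ_{i=1}^n E[‖A(S, V) − A(S^{(i)}, V)‖]. -/
open MeasureTheory ProbabilityTheory
open scoped NNReal

lemma aux_map_eval {ι : Type*} [Fintype ι] {𝒵 : Type*} [MeasurableSpace 𝒵]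
    (μ : Measure 𝒵) [IsProbabilityMeasure μ] (i : ι) :
    Measure.map (Function.eval i) (Measure.pi fun _ : ι => μ) = μ := by
  classical
  ext s hs
  rw [Measure.map_apply (measurable_pi_apply i) hs, Set.eval_preimage, Measure.pi_pi]
  rw [Fintype.prod_eq_single i (fun j hj => by simp [Function.update_of_ne hj])]
  simp

lemma aux_iid_map_pi {Ω : Type*} {mΩ : MeasurableSpace Ω} {P0 : Measure Ω}
    [IsProbabilityMeasure P0] {ι : Type*} [Fintype ι] {𝒵 : Type*} [MeasurableSpace 𝒵]
    (μ : Measure 𝒵) [IsProbabilityMeasure μ] (f : ι → Ω → 𝒵) (hf : ∀ i, Measurable (f i))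
    (hind : iIndepFun f P0)
    (hlaw : ∀ i, Measure.map (f i) P0 = μ) :
    Measure.map (fun ω i => f i ω) P0 = Measure.pi (fun _ : ι => μ) := by
  refine (Measure.pi_eq fun s hs => ?_).symm
  rw [Measure.map_apply (measurable_pi_lambda _ hf) (MeasurableSet.univ_pi hs)]
  have hpre : (fun ω i => f i ω) ⁻¹' Set.pi Set.univ s = ⋂ i, f i ⁻¹' s i := by
    ext ω; simp [Set.mem_pi]
  rw [hpre, hind.meas_iInter (fun i => ⟨s i, hs i, rfl⟩)]
  exact Finset.prod_congr rfl fun i _ => by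
    rw [← hlaw i, Measure.map_apply (hf i) (hs i)]

lemma aux_swap {ι : Type*} [Fintype ι] [DecidableEq ι] {𝒵 : Type*} [MeasurableSpace 𝒵]
    (μ : Measure 𝒵) [IsProbabilityMeasure μ] (i : ι) :
    MeasurePreserving
      (fun q : (ι → 𝒵) × (ι → 𝒵) =>
        (Function.update q.1 i (q.2 i), Function.update q.2 i (q.1 i)))
      ((Measure.pi fun _ : ι => μ).prod (Measure.pi fun _ : ι => μ))
      ((Measure.pi fun _ : ι => μ).prod (Measure.pi fun _ : ι => μ)) := by
  classical
  set τ : ι ⊕ ι ≃ ι ⊕ ι := Equiv.swap (.inl i) (.inr i) with hτ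
  set σ := MeasurableEquiv.sumPiEquivProdPi (fun _ : ι ⊕ ι => 𝒵) with hσ
  have h1 : MeasurePreserving (MeasurableEquiv.piCongrLeft (fun _ : ι ⊕ ι => 𝒵) τ)
      (Measure.pi fun _ : ι ⊕ ι => μ) (Measure.pi fun _ : ι ⊕ ι => μ) :=
    measurePreserving_piCongrLeft (fun _ : ι ⊕ ι => μ) τ
  have h2 := measurePreserving_sumPiEquivProdPi (X := fun _ : ι ⊕ ι => 𝒵)
    (fun _ : ι ⊕ ι => μ)
  have h3 := measurePreserving_sumPiEquivProdPi_symm (X := fun _ : ι ⊕ ι => 𝒵)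
    (fun _ : ι ⊕ ι => μ)
  have hcomp := (h2.comp h1).comp h3
  have hval : ∀ (x : ι ⊕ ι → 𝒵) (k : ι ⊕ ι),
      (MeasurableEquiv.piCongrLeft (fun _ : ι ⊕ ι => 𝒵) τ) x k = x (τ k) := by
    intro x k
    conv_lhs => rw [show k = τ (τ k) from (Equiv.swap_apply_self _ _ k).symm]
    exact MeasurableEquiv.piCongrLeft_apply_apply (β := fun _ : ι ⊕ ι => 𝒵) τ x (τ k)
  have hfun : (σ ∘ (MeasurableEquiv.piCongrLeft (fun _ : ι ⊕ ι => 𝒵) τ) ∘ σ.symm)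
      = (fun q : (ι → 𝒵) × (ι → 𝒵) =>
        (Function.update q.1 i (q.2 i), Function.update q.2 i (q.1 i))) := by
    funext q
    have hsymm : σ.symm q = Sum.elim q.1 q.2 := by
      ext (j | j) <;> rfl
    refine Prod.ext ?_ ?_ <;> funext j
    · show (MeasurableEquiv.piCongrLeft (fun _ : ι ⊕ ι => 𝒵) τ) (σ.symm q) (.inl j)
        = Function.update q.1 i (q.2 i) j
      rw [hsymm, hval]
      by_cases hj : j = i
      · subst hj; simp [hτ, Equiv.swap_apply_left]
      · have hτj : τ (Sum.inl j) = Sum.inl j :=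
          Equiv.swap_apply_of_ne_of_ne (fun h => hj (Sum.inl.inj h)) (by simp)
        rw [hτj]
        simp [Function.update_of_ne hj]
    · show (MeasurableEquiv.piCongrLeft (fun _ : ι ⊕ ι => 𝒵) τ) (σ.symm q) (.inr j)
        = Function.update q.2 i (q.1 i) j
      rw [hsymm, hval]
      by_cases hj : j = i
      · subst hj; simp [hτ, Equiv.swap_apply_right]
      · have hτj : τ (Sum.inr j) = Sum.inr j :=
          Equiv.swap_apply_of_ne_of_ne (by simp) (fun h => hj (Sum.inr.inj h))
        rw [hτj]
        simp [Function.update_of_ne hj]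
  rw [← hfun]
  exact hcomp

/-- Generalization bound via on-average replace-one stability: if the loss `ℓ(·, z)` is
`L`-Lipschitz for every `z` and `W = A(S, V)` is the integrable output of a (possibly
randomized) algorithm with internal randomness `V` independent of the i.i.d. samples
`S, S'`, then `gen ≤ (2L/n) · Σ_i E[‖A(S, V) − A(S^{(i)}, V)‖]`, where `S^{(i)}` is `S`
with its `i`-th entry replaced by `Z'_i`. -/
theorem gen_le_replace_one_stability
    {d n : ℕ} (hn : 0 < n) {Ω 𝒵 𝒱 : Type*}
    [MeasureSpace Ω] [IsProbabilityMeasure (ℙ : Measure Ω)]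
    [MeasurableSpace 𝒵] [StandardBorelSpace 𝒵] [MeasurableSpace 𝒱]
    (μ : Measure 𝒵) [IsProbabilityMeasure μ]
    (Z Z' : Fin n → Ω → 𝒵)
    (hZmeas : ∀ i, Measurable (Z i)) (hZ'meas : ∀ i, Measurable (Z' i))
    (hiid : iIndepFun
      (Sum.elim Z Z' : Fin n ⊕ Fin n → Ω → 𝒵) ℙ)
    (hlaw : ∀ i, Measure.map (Z i) ℙ = μ) (hlaw' : ∀ i, Measure.map (Z' i) ℙ = μ)
    (V : Ω → 𝒱) (hVmeas : Measurable V)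
    (hVindep : IndepFun (fun ω => (fun i => Z i ω, fun i => Z' i ω)) V ℙ)
    (A : (Fin n → 𝒵) → 𝒱 → EuclideanSpace ℝ (Fin d))
    (hA : Measurable (fun p : (Fin n → 𝒵) × 𝒱 => A p.1 p.2))
    (W : Ω → EuclideanSpace ℝ (Fin d))
    (hW : W = fun ω => A (fun i => Z i ω) (V ω))
    (hWint : Integrable W ℙ)
    (ℓ : EuclideanSpace ℝ (Fin d) → 𝒵 → ℝ) (L : ℝ≥0)
    (hℓmeas : Measurable (fun p : EuclideanSpace ℝ (Fin d) × 𝒵 => ℓ p.1 p.2))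
    (hLip : ∀ z, LipschitzWith L (fun w => ℓ w z))
    (hint_emp : ∀ i, Integrable (fun ω => ℓ (W ω) (Z i ω)) ℙ)
    (hint_pop : Integrable (fun ω => ∫ z, ℓ (W ω) z ∂μ) ℙ)
    (hint_loss : ∀ w, Integrable (fun z => ℓ w z) μ)
    (hint_stab : ∀ i, Integrable (fun ω =>
      ‖A (fun j => Z j ω) (V ω)
        - A (Function.update (fun j => Z j ω) i (Z' i ω)) (V ω)‖) ℙ) :
    (∫ ω, ∫ z, ℓ (W ω) z ∂μ ∂ℙ) - (∫ ω, (n : ℝ)⁻¹ * ∑ i, ℓ (W ω) (Z i ω) ∂ℙ)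
      ≤ (2 * (L : ℝ) / n) * ∑ i : Fin n,
          ∫ ω, ‖A (fun j => Z j ω) (V ω)
            - A (Function.update (fun j => Z j ω) i (Z' i ω)) (V ω)‖ ∂ℙ := by
  classical
  set πμ : Measure (Fin n → 𝒵) := Measure.pi (fun _ : Fin n => μ) with hπμ
  set ν : Measure 𝒱 := Measure.map V ℙ with hνdef
  haveI : IsProbabilityMeasure ν := Measure.isProbabilityMeasure_map hVmeas.aemeasurable
  set P : Measure (((Fin n → 𝒵) × (Fin n → 𝒵)) × 𝒱) := (πμ.prod πμ).prod ν with hPdef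
  set T : Ω → ((Fin n → 𝒵) × (Fin n → 𝒵)) × 𝒱 :=
    fun ω => ((fun i => Z i ω, fun i => Z' i ω), V ω) with hTdef
  have meas_S : Measurable (fun ω => (fun i => Z i ω)) := measurable_pi_lambda _ hZmeas
  have meas_S' : Measurable (fun ω => (fun i => Z' i ω)) := measurable_pi_lambda _ hZ'meas
  have meas_pair : Measurable (fun ω => ((fun i => Z i ω), fun i => Z' i ω)) :=
    meas_S.prodMk meas_S'
  have meas_T : Measurable T := meas_pair.prodMk hVmeas
  -- law of T
  have measG : Measurable (fun ω (k : Fin n ⊕ Fin n) => Sum.elim Z Z' k ω) :=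
    measurable_pi_lambda _ (fun k => by cases k with
      | inl i => exact hZmeas i
      | inr i => exact hZ'meas i)
  have hpair : Measure.map (fun ω => ((fun i => Z i ω), fun i => Z' i ω)) ℙ = πμ.prod πμ := by
    have hG : Measure.map (fun ω (k : Fin n ⊕ Fin n) => Sum.elim Z Z' k ω) ℙ
        = Measure.pi (fun _ : Fin n ⊕ Fin n => μ) :=
      aux_iid_map_pi μ (Sum.elim Z Z')
        (fun k => by cases k with
          | inl i => exact hZmeas i
          | inr i => exact hZ'meas i)
        hiid
        (fun k => by cases k with
          | inl i => exact hlaw i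
          | inr i => exact hlaw' i)
    have hcompσ : (fun ω => ((fun i => Z i ω), fun i => Z' i ω))
        = (MeasurableEquiv.sumPiEquivProdPi (fun _ : Fin n ⊕ Fin n => 𝒵))
          ∘ (fun ω (k : Fin n ⊕ Fin n) => Sum.elim Z Z' k ω) := rfl
    rw [hcompσ, ← Measure.map_map
      (MeasurableEquiv.sumPiEquivProdPi (fun _ : Fin n ⊕ Fin n => 𝒵)).measurable measG, hG,
      (measurePreserving_sumPiEquivProdPi (fun _ : Fin n ⊕ Fin n => μ)).map_eq]
  have hT : Measure.map T ℙ = P := by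
    rw [hTdef, (indepFun_iff_map_prod_eq_prod_map_map meas_pair.aemeasurable
      hVmeas.aemeasurable).mp hVindep, hpair]
  -- functions on the product space
  set w : ((Fin n → 𝒵) × (Fin n → 𝒵)) × 𝒱 → EuclideanSpace ℝ (Fin d) :=
    fun p => A p.1.1 p.2 with hwdef
  have meas_w : Measurable w := hA.comp (measurable_fst.fst.prodMk measurable_snd)
  set wi : Fin n → ((Fin n → 𝒵) × (Fin n → 𝒵)) × 𝒱 → EuclideanSpace ℝ (Fin d) :=
    fun i p => A (Function.update p.1.1 i (p.1.2 i)) p.2 with hwidef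
  have meas_wi : ∀ i, Measurable (wi i) := fun i =>
    hA.comp ((measurable_update'.comp (measurable_fst.fst.prodMk
      ((measurable_pi_apply i).comp measurable_fst.snd))).prodMk measurable_snd)
  have hTw : ∀ ω, w (T ω) = W ω := fun ω => by rw [hW]
  have hTwi : ∀ i ω, wi i (T ω) = A (Function.update (fun j => Z j ω) i (Z' i ω)) (V ω) :=
    fun i ω => rfl
  -- transfer helpers
  have hInt_transfer : ∀ (F : ((Fin n → 𝒵) × (Fin n → 𝒵)) × 𝒱 → ℝ), Measurable F →
      (∫ p, F p ∂P) = ∫ ω, F (T ω) ∂ℙ := by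
    intro F hF
    rw [← hT, integral_map meas_T.aemeasurable hF.aestronglyMeasurable]
  have hIntble_transfer : ∀ (F : ((Fin n → 𝒵) × (Fin n → 𝒵)) × 𝒱 → ℝ), Measurable F →
      Integrable (fun ω => F (T ω)) ℙ → Integrable F P := by
    intro F hF h
    rw [← hT]
    exact (integrable_map_measure hF.aestronglyMeasurable meas_T.aemeasurable).mpr h
  -- measurabilities of integrands
  have meas_f : ∀ i : Fin n, Measurable (fun p : ((Fin n → 𝒵) × (Fin n → 𝒵)) × 𝒱 =>
      ℓ (w p) (p.1.1 i)) := fun i =>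
    hℓmeas.comp (meas_w.prodMk ((measurable_pi_apply i).comp measurable_fst.fst))
  have meas_g : ∀ i : Fin n, Measurable (fun p : ((Fin n → 𝒵) × (Fin n → 𝒵)) × 𝒱 =>
      ℓ (w p) (p.1.2 i)) := fun i =>
    hℓmeas.comp (meas_w.prodMk ((measurable_pi_apply i).comp measurable_fst.snd))
  have meas_g' : ∀ i : Fin n, Measurable (fun p : ((Fin n → 𝒵) × (Fin n → 𝒵)) × 𝒱 =>
      ℓ (wi i p) (p.1.2 i)) := fun i =>
    hℓmeas.comp ((meas_wi i).prodMk ((measurable_pi_apply i).comp measurable_fst.snd))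
  have meas_h : ∀ i : Fin n, Measurable (fun p : ((Fin n → 𝒵) × (Fin n → 𝒵)) × 𝒱 =>
      ‖w p - wi i p‖) := fun i => (meas_w.sub (meas_wi i)).norm
  have smeas_pop : StronglyMeasurable (fun x : (Fin n → 𝒵) × 𝒱 => ∫ z, ℓ (A x.1 x.2) z ∂μ) := by
    have : StronglyMeasurable (fun q : ((Fin n → 𝒵) × 𝒱) × 𝒵 => ℓ (A q.1.1 q.1.2) q.2) :=
      (hℓmeas.comp ((hA.comp measurable_fst).prodMk measurable_snd)).stronglyMeasurable
    exact this.integral_prod_right'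
  have meas_pop : Measurable (fun p : ((Fin n → 𝒵) × (Fin n → 𝒵)) × 𝒱 =>
      ∫ z, ℓ (w p) z ∂μ) :=
    (smeas_pop.measurable).comp (measurable_fst.fst.prodMk measurable_snd)
  -- marginal laws
  have heval : ∀ i : Fin n, Measure.map (Function.eval i) πμ = μ := fun i => aux_map_eval μ i
  have hMfst : Measure.map Prod.fst P = πμ.prod πμ := by
    rw [hPdef, Measure.map_fst_prod, measure_univ, one_smul]
  have hmapZ' : ∀ i : Fin n,
      Measure.map (fun p : ((Fin n → 𝒵) × (Fin n → 𝒵)) × 𝒱 => p.1.2 i) P = μ := by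
    intro i
    have h1 : Measure.map (fun p : ((Fin n → 𝒵) × (Fin n → 𝒵)) × 𝒱 => p.1.2) P = πμ := by
      have hc : (fun p : ((Fin n → 𝒵) × (Fin n → 𝒵)) × 𝒱 => p.1.2)
          = Prod.snd ∘ Prod.fst := rfl
      rw [hc, ← Measure.map_map measurable_snd measurable_fst, hMfst,
        Measure.map_snd_prod, measure_univ, one_smul]
    have hc : (fun p : ((Fin n → 𝒵) × (Fin n → 𝒵)) × 𝒱 => p.1.2 i)
        = Function.eval i ∘ (fun p : ((Fin n → 𝒵) × (Fin n → 𝒵)) × 𝒱 => p.1.2) := rfl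
    rw [hc, ← Measure.map_map (measurable_pi_apply i)
      (measurable_fst.snd : Measurable fun p : ((Fin n → 𝒵) × (Fin n → 𝒵)) × 𝒱 => p.1.2),
      h1, heval i]
  -- basic integrabilities over P
  have hIntw : Integrable w P := by
    rw [← hT]
    refine (integrable_map_measure meas_w.aestronglyMeasurable meas_T.aemeasurable).mpr ?_
    have hc : (w ∘ T) = W := funext hTw
    rw [hc]; exact hWint
  -- Lipschitz pointwise bounds
  have hLipBound : ∀ (x : EuclideanSpace ℝ (Fin d)) (z : 𝒵),
      |ℓ x z| ≤ |ℓ 0 z| + (L : ℝ) * ‖x‖ := by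
    intro x z
    have h := (hLip z).dist_le_mul x 0
    rw [Real.dist_eq, dist_eq_norm, sub_zero] at h
    calc |ℓ x z| = |(ℓ x z - ℓ 0 z) + ℓ 0 z| := by ring_nf
      _ ≤ |ℓ x z - ℓ 0 z| + |ℓ 0 z| := abs_add_le _ _
      _ ≤ (L : ℝ) * ‖x‖ + |ℓ 0 z| := add_le_add h le_rfl
      _ = |ℓ 0 z| + (L : ℝ) * ‖x‖ := add_comm _ _
  have hLipDiff : ∀ (x y : EuclideanSpace ℝ (Fin d)) (z : 𝒵),
      ℓ x z - ℓ y z ≤ (L : ℝ) * ‖x - y‖ := by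
    intro x y z
    have h := (hLip z).dist_le_mul x y
    rw [Real.dist_eq, dist_eq_norm] at h
    exact le_trans (le_abs_self _) h
  -- integrabilities over P
  have hInt_ℓ0 : ∀ i : Fin n, Integrable
      (fun p : ((Fin n → 𝒵) × (Fin n → 𝒵)) × 𝒱 => ℓ 0 (p.1.2 i)) P := by
    intro i
    have h0 : Integrable (fun z => ℓ 0 z)
        (Measure.map (fun p : ((Fin n → 𝒵) × (Fin n → 𝒵)) × 𝒱 => p.1.2 i) P) := by
      rw [hmapZ' i]; exact hint_loss 0
    exact (integrable_map_measure
      ((hℓmeas.comp (measurable_const.prodMk measurable_id)).aestronglyMeasurable)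
      ((measurable_pi_apply i).comp measurable_fst.snd).aemeasurable).mp h0
  have hInt_g : ∀ i : Fin n, Integrable
      (fun p : ((Fin n → 𝒵) × (Fin n → 𝒵)) × 𝒱 => ℓ (w p) (p.1.2 i)) P := by
    intro i
    refine Integrable.mono' (((hInt_ℓ0 i).abs).add (hIntw.norm.const_mul (L : ℝ)))
      (meas_g i).aestronglyMeasurable (Filter.Eventually.of_forall fun p => ?_)
    simpa [Real.norm_eq_abs] using hLipBound (w p) (p.1.2 i)
  have hInt_f : ∀ i : Fin n, Integrable
      (fun p : ((Fin n → 𝒵) × (Fin n → 𝒵)) × 𝒱 => ℓ (w p) (p.1.1 i)) P := by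
    intro i
    refine hIntble_transfer _ (meas_f i) ?_
    simp only [hTw]
    exact hint_emp i
  have hInt_h : ∀ i : Fin n, Integrable
      (fun p : ((Fin n → 𝒵) × (Fin n → 𝒵)) × 𝒱 => ‖w p - wi i p‖) P := by
    intro i
    refine hIntble_transfer _ (meas_h i) ?_
    simp only [hTw, hTwi, hW]
    exact hint_stab i
  have hInt_pop : Integrable
      (fun p : ((Fin n → 𝒵) × (Fin n → 𝒵)) × 𝒱 => ∫ z, ℓ (w p) z ∂μ) P := by
    refine hIntble_transfer _ meas_pop ?_
    simp only [hTw]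
    exact hint_pop
  -- swap invariance
  have hswap' : ∀ i : Fin n, MeasurePreserving
      (Prod.map (fun q : (Fin n → 𝒵) × (Fin n → 𝒵) =>
        (Function.update q.1 i (q.2 i), Function.update q.2 i (q.1 i))) (id : 𝒱 → 𝒱)) P P :=
    fun i => (aux_swap μ i).prod (MeasurePreserving.id ν)
  have hInt_g' : ∀ i : Fin n, Integrable
      (fun p : ((Fin n → 𝒵) × (Fin n → 𝒵)) × 𝒱 => ℓ (wi i p) (p.1.2 i)) P := by
    intro i
    have h := ((hswap' i).integrable_comp (meas_f i).aestronglyMeasurable).mpr (hInt_f i)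
    have hc : ((fun p : ((Fin n → 𝒵) × (Fin n → 𝒵)) × 𝒱 => ℓ (w p) (p.1.1 i)) ∘
        (Prod.map (fun q : (Fin n → 𝒵) × (Fin n → 𝒵) =>
          (Function.update q.1 i (q.2 i), Function.update q.2 i (q.1 i))) (id : 𝒱 → 𝒱)))
        = fun p : ((Fin n → 𝒵) × (Fin n → 𝒵)) × 𝒱 => ℓ (wi i p) (p.1.2 i) := by
      funext p
      simp [hwdef, hwidef, Function.comp, Prod.map, Function.update_self]
    rwa [hc] at h
  have I2 : ∀ i : Fin n, ∫ p, ℓ (w p) (p.1.1 i) ∂P = ∫ p, ℓ (wi i p) (p.1.2 i) ∂P := by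
    intro i
    calc ∫ p, ℓ (w p) (p.1.1 i) ∂P
        = ∫ p, ℓ (w p) (p.1.1 i) ∂(Measure.map (Prod.map (fun q : (Fin n → 𝒵) × (Fin n → 𝒵) =>
            (Function.update q.1 i (q.2 i), Function.update q.2 i (q.1 i))) (id : 𝒱 → 𝒱)) P) := by
          rw [(hswap' i).map_eq]
      _ = ∫ p, ℓ (wi i p) (p.1.2 i) ∂P := by
          rw [integral_map (hswap' i).measurable.aemeasurable (meas_f i).aestronglyMeasurable]
          refine integral_congr_ae (Filter.Eventually.of_forall fun p => ?_)
          simp [hwdef, hwidef, Prod.map, Function.update_self]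
  -- the reshuffling map
  have hρ : MeasurePreserving
      (fun p : ((Fin n → 𝒵) × (Fin n → 𝒵)) × 𝒱 => ((p.1.1, p.2), p.1.2))
      P ((πμ.prod ν).prod πμ) := by
    have h1 := measurePreserving_prodAssoc πμ πμ ν
    have h2 : MeasurePreserving (Prod.map (id : (Fin n → 𝒵) → (Fin n → 𝒵))
        (Prod.swap : (Fin n → 𝒵) × 𝒱 → 𝒱 × (Fin n → 𝒵)))
        (πμ.prod (πμ.prod ν)) (πμ.prod (ν.prod πμ)) :=
      (MeasurePreserving.id πμ).prod Measure.measurePreserving_swap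
    have h3 : MeasurePreserving (MeasurableEquiv.prodAssoc :
        ((Fin n → 𝒵) × 𝒱) × (Fin n → 𝒵) ≃ᵐ (Fin n → 𝒵) × 𝒱 × (Fin n → 𝒵)).symm
        (πμ.prod (ν.prod πμ)) ((πμ.prod ν).prod πμ) :=
      MeasurePreserving.symm _ (measurePreserving_prodAssoc πμ ν πμ)
    have hcomp := (h3.comp h2).comp h1
    have hfun : ((MeasurableEquiv.prodAssoc.symm :
          (Fin n → 𝒵) × 𝒱 × (Fin n → 𝒵) → ((Fin n → 𝒵) × 𝒱) × (Fin n → 𝒵)) ∘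
        (Prod.map (id : (Fin n → 𝒵) → (Fin n → 𝒵))
          (Prod.swap : (Fin n → 𝒵) × 𝒱 → 𝒱 × (Fin n → 𝒵))) ∘
        (MeasurableEquiv.prodAssoc :
          ((Fin n → 𝒵) × (Fin n → 𝒵)) × 𝒱 ≃ᵐ (Fin n → 𝒵) × (Fin n → 𝒵) × 𝒱))
        = fun p : ((Fin n → 𝒵) × (Fin n → 𝒵)) × 𝒱 => ((p.1.1, p.2), p.1.2) := rfl
    exact hfun ▸ hcomp
  have hφmap : ∀ i : Fin n, Measure.map
      (fun p : ((Fin n → 𝒵) × (Fin n → 𝒵)) × 𝒱 => ((p.1.1, p.2), p.1.2 i)) P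
      = (πμ.prod ν).prod μ := by
    intro i
    have hc : (fun p : ((Fin n → 𝒵) × (Fin n → 𝒵)) × 𝒱 => ((p.1.1, p.2), p.1.2 i))
        = (Prod.map (id : (Fin n → 𝒵) × 𝒱 → (Fin n → 𝒵) × 𝒱) (Function.eval i)) ∘
          (fun p : ((Fin n → 𝒵) × (Fin n → 𝒵)) × 𝒱 => ((p.1.1, p.2), p.1.2)) := rfl
    rw [hc, ← Measure.map_map (measurable_id.prodMap (measurable_pi_apply i)) hρ.measurable,
      hρ.map_eq, ← Measure.map_prod_map _ _ measurable_id (measurable_pi_apply i),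
      Measure.map_id, heval i]
  have hMmap : Measure.map (fun p : ((Fin n → 𝒵) × (Fin n → 𝒵)) × 𝒱 => (p.1.1, p.2)) P
      = πμ.prod ν := by
    have hc : (fun p : ((Fin n → 𝒵) × (Fin n → 𝒵)) × 𝒱 => (p.1.1, p.2))
        = Prod.fst ∘ (fun p : ((Fin n → 𝒵) × (Fin n → 𝒵)) × 𝒱 => ((p.1.1, p.2), p.1.2)) := rfl
    rw [hc, ← Measure.map_map measurable_fst hρ.measurable, hρ.map_eq,
      Measure.map_fst_prod, measure_univ, one_smul]
  -- I1 : population = ghost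
  have hFmeas : Measurable (fun q : ((Fin n → 𝒵) × 𝒱) × 𝒵 => ℓ (A q.1.1 q.1.2) q.2) :=
    hℓmeas.comp ((hA.comp measurable_fst).prodMk measurable_snd)
  have hφmeas : ∀ i : Fin n, Measurable
      (fun p : ((Fin n → 𝒵) × (Fin n → 𝒵)) × 𝒱 => ((p.1.1, p.2), p.1.2 i)) := fun i =>
    (measurable_fst.fst.prodMk measurable_snd).prodMk
      ((measurable_pi_apply i).comp measurable_fst.snd)
  have hIq : ∀ i : Fin n, Integrable
      (fun q : ((Fin n → 𝒵) × 𝒱) × 𝒵 => ℓ (A q.1.1 q.1.2) q.2) ((πμ.prod ν).prod μ) := by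
    intro i
    rw [← hφmap i]
    exact (integrable_map_measure hFmeas.aestronglyMeasurable
      (hφmeas i).aemeasurable).mpr (hInt_g i)
  have I1 : ∀ i : Fin n,
      ∫ p, (∫ z, ℓ (w p) z ∂μ) ∂P = ∫ p, ℓ (w p) (p.1.2 i) ∂P := by
    intro i
    have step1 : ∫ p, ℓ (w p) (p.1.2 i) ∂P
        = ∫ q, ℓ (A q.1.1 q.1.2) q.2 ∂((πμ.prod ν).prod μ) := by
      rw [← hφmap i]
      exact (integral_map (hφmeas i).aemeasurable hFmeas.aestronglyMeasurable).symm
    have step2 : ∫ q, ℓ (A q.1.1 q.1.2) q.2 ∂((πμ.prod ν).prod μ)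
        = ∫ x, ∫ z, ℓ (A x.1 x.2) z ∂μ ∂(πμ.prod ν) := integral_prod _ (hIq i)
    have step3 : ∫ x, ∫ z, ℓ (A x.1 x.2) z ∂μ ∂(πμ.prod ν)
        = ∫ p, (∫ z, ℓ (w p) z ∂μ) ∂P := by
      rw [← hMmap]
      exact integral_map (measurable_fst.fst.prodMk measurable_snd).aemeasurable
        smeas_pop.aestronglyMeasurable
    rw [step1, step2, step3]
  -- per-index inequality
  have key : ∀ i : Fin n, ∫ p, ℓ (w p) (p.1.2 i) ∂P - ∫ p, ℓ (w p) (p.1.1 i) ∂P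
      ≤ (L : ℝ) * ∫ p, ‖w p - wi i p‖ ∂P := by
    intro i
    rw [I2 i, ← integral_sub (hInt_g i) (hInt_g' i), ← integral_const_mul]
    refine integral_mono ((hInt_g i).sub (hInt_g' i)) ((hInt_h i).const_mul _) fun p => ?_
    exact hLipDiff (w p) (wi i p) (p.1.2 i)
  -- transfers between Ω-integrals and P-integrals
  have hpop_eq : ∫ ω, (∫ z, ℓ (W ω) z ∂μ) ∂ℙ = ∫ p, (∫ z, ℓ (w p) z ∂μ) ∂P := by
    rw [hInt_transfer _ meas_pop]
    exact integral_congr_ae (Filter.Eventually.of_forall fun ω => by rw [hW])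
  have hemp_eq : ∀ i : Fin n, ∫ ω, ℓ (W ω) (Z i ω) ∂ℙ = ∫ p, ℓ (w p) (p.1.1 i) ∂P := by
    intro i
    rw [hInt_transfer _ (meas_f i)]
    exact integral_congr_ae (Filter.Eventually.of_forall fun ω => by rw [hW])
  have hstab_eq : ∀ i : Fin n,
      ∫ ω, ‖A (fun j => Z j ω) (V ω)
        - A (Function.update (fun j => Z j ω) i (Z' i ω)) (V ω)‖ ∂ℙ
      = ∫ p, ‖w p - wi i p‖ ∂P := by
    intro i
    rw [hInt_transfer _ (meas_h i)]
  -- assembling the goal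
  have hsum_emp : (∫ ω, (n : ℝ)⁻¹ * ∑ i, ℓ (W ω) (Z i ω) ∂ℙ)
      = (n : ℝ)⁻¹ * ∑ i : Fin n, ∫ p, ℓ (w p) (p.1.1 i) ∂P := by
    rw [integral_const_mul, integral_finset_sum _ (fun i _ => hint_emp i)]
    congr 1
    exact Finset.sum_congr rfl fun i _ => hemp_eq i
  have hpop_avg : ∫ p, (∫ z, ℓ (w p) z ∂μ) ∂P
      = (n : ℝ)⁻¹ * ∑ i : Fin n, ∫ p, ℓ (w p) (p.1.2 i) ∂P := by
    have hsum : ∑ i : Fin n, ∫ p, ℓ (w p) (p.1.2 i) ∂P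
        = n * ∫ p, (∫ z, ℓ (w p) z ∂μ) ∂P := by
      rw [Finset.sum_congr rfl (fun i _ => (I1 i).symm), Finset.sum_const, Finset.card_univ,
        Fintype.card_fin, nsmul_eq_mul]
    rw [hsum, inv_mul_cancel_left₀ (by exact_mod_cast hn.ne' : (n : ℝ) ≠ 0)]
  have hn' : (0 : ℝ) < n := by exact_mod_cast hn
  rw [hpop_eq, hsum_emp, hpop_avg]
  simp only [hstab_eq]
  have hAnonneg : (0 : ℝ) ≤ ∑ i : Fin n, ∫ p, ‖w p - wi i p‖ ∂P :=
    Finset.sum_nonneg fun i _ => integral_nonneg fun p => norm_nonneg _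
  calc (n : ℝ)⁻¹ * ∑ i : Fin n, ∫ p, ℓ (w p) (p.1.2 i) ∂P
        - (n : ℝ)⁻¹ * ∑ i : Fin n, ∫ p, ℓ (w p) (p.1.1 i) ∂P
      = (n : ℝ)⁻¹ * ∑ i : Fin n,
          (∫ p, ℓ (w p) (p.1.2 i) ∂P - ∫ p, ℓ (w p) (p.1.1 i) ∂P) := by
        rw [← mul_sub, ← Finset.sum_sub_distrib]
    _ ≤ (n : ℝ)⁻¹ * ∑ i : Fin n, (L : ℝ) * ∫ p, ‖w p - wi i p‖ ∂P := by
        exact mul_le_mul_of_nonneg_left (Finset.sum_le_sum fun i _ => key i) (by positivity)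
    _ = (L : ℝ) / n * ∑ i : Fin n, ∫ p, ‖w p - wi i p‖ ∂P := by
        rw [← Finset.mul_sum]; ring
    _ ≤ (2 * (L : ℝ) / n) * ∑ i : Fin n, ∫ p, ‖w p - wi i p‖ ∂P := by
        refine mul_le_mul_of_nonneg_right ?_ hAnonneg
        rw [div_eq_mul_inv, div_eq_mul_inv]
        exact mul_le_mul_of_nonneg_right (by linarith [L.coe_nonneg]) (by positivity)
end

section
/- Let 𝒲 ⊆ ℝ^d be a nonempty, closed, convex set bounded with diameter at most D, and assume that for every z ∈ Z the map w ↦ ℓ(w, z) is convex and L-Lipschitz on ℝ^d. Let η > 0 and T ∈ ℕ⁺. Let full-batch projected subgradient descent start from a fixed w_0 ∈ 𝒲 and iterate W_{t+1} = Π_𝒲(W_t − η · g_t) for t = 0, …, T−1, where g_t is a measurable selection of a subgradient of the empirical loss L_S at W_t and Π_𝒲 is the Euclidean projection onto 𝒲 (so the whole trajectory lies in 𝒲). Then the expected generalization error of the terminal iterate satisfies E[L_μ(W_T)] − E[L_S(W_T)] ≤ 8L²√T·η + 8L²Tη/n. Consequently, this bound holds uniformly over all such convex-Lipschitz-bounded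 problems and all data distributions μ. -/
open MeasureTheory ProbabilityTheory
open scoped NNReal RealInnerProductSpace

set_option linter.unusedSectionVars false

namespace GenGDAux

section Prox

variable {E : Type*} [NormedAddCommGroup E] [InnerProductSpace ℝ E]

/-- A (global) subgradient of `f` at `x`. -/
def IsSubgrad (f : E → ℝ) (x g : E) : Prop := ∀ v, f x + ⟪g, v - x⟫ ≤ f v

theorem IsSubgrad.mono {f : E → ℝ} {x y gx gy : E}
    (hx : IsSubgrad f x gx) (hy : IsSubgrad f y gy) : 0 ≤ ⟪gx - gy, x - y⟫ := by
  have h1 := hx y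
  have h2 := hy x
  have e1 : ⟪gx, y - x⟫ = -⟪gx, x - y⟫ := by rw [← inner_neg_right]; congr 1; abel
  rw [inner_sub_left]
  linarith [e1 ▸ h1, h2]

theorem IsSubgrad.norm_le {f : E → ℝ} {x g : E} {L : ℝ} (hL0 : 0 ≤ L)
    (hg : IsSubgrad f x g) (hl : ∀ a b, f a - f b ≤ L * ‖a - b‖) : ‖g‖ ≤ L := by
  have h := hg (x + g)
  have h2 : f (x + g) - f x ≤ L * ‖g‖ := by simpa using hl (x + g) x
  have h3 : ⟪g, x + g - x⟫ = ‖g‖ ^ 2 := by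
    rw [add_sub_cancel_left, real_inner_self_eq_norm_sq]
  rcases eq_or_lt_of_le (norm_nonneg g) with h0 | h0
  · rw [← h0]; exact hL0
  · nlinarith [h3 ▸ h]

/-- difference bound for subgradients of two functions whose difference is `c`-Lipschitz. -/
theorem subgrad_diff_bound {f f' : E → ℝ} {p p' g g' : E} {c : ℝ}
    (hg : IsSubgrad f p g) (hg' : IsSubgrad f' p' g')
    (hdiff : ∀ a b, (f a - f' a) - (f b - f' b) ≤ c * ‖a - b‖) :
    -(c * ‖p - p'‖) ≤ ⟪g - g', p - p'⟫ := by
  have h1 := hg p'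
  have h2 := hg' p
  have e1 : ⟪g, p' - p⟫ = -⟪g, p - p'⟫ := by rw [← inner_neg_right]; congr 1; abel
  have hd := hdiff p' p
  rw [norm_sub_rev] at hd
  rw [inner_sub_left]
  linarith [e1 ▸ h1, h2]

noncomputable def proxObj (η : ℝ) (f : E → ℝ) (w x : E) : ℝ :=
  f x + ‖x - w‖ ^ 2 / (2 * η)

noncomputable def proxPt (η : ℝ) (f : E → ℝ) (w : E) : E :=
  Classical.epsilon (fun p => ∀ x, proxObj η f w p ≤ proxObj η f w x)

theorem lipschitzWith_of_le {f : E → ℝ} {L : ℝ} (hL0 : 0 ≤ L)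
    (hl : ∀ a b, f a - f b ≤ L * ‖a - b‖) : LipschitzWith (Real.toNNReal L) f := by
  apply LipschitzWith.of_dist_le_mul
  intro x y
  rw [Real.dist_eq, dist_eq_norm, Real.coe_toNNReal _ hL0, abs_sub_le_iff]
  exact ⟨hl x y, by rw [norm_sub_rev]; exact hl y x⟩

theorem prox_exists [FiniteDimensional ℝ E] {η L : ℝ} (hη : 0 < η) (hL0 : 0 ≤ L)
    {f : E → ℝ} (hl : ∀ a b, f a - f b ≤ L * ‖a - b‖) (w : E) :
    ∃ p, ∀ x, proxObj η f w p ≤ proxObj η f w x := by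
  have hfc : Continuous f := (lipschitzWith_of_le hL0 hl).continuous
  have hGc : Continuous (proxObj η f w) := by
    apply hfc.add
    exact (((continuous_id.sub continuous_const).norm.pow 2).div_const _)
  set R := 2 * η * L with hR
  have hR0 : 0 ≤ R := by positivity
  have hKc : IsCompact (Metric.closedBall w R) := isCompact_closedBall w R
  have hwK : w ∈ Metric.closedBall w R := Metric.mem_closedBall_self hR0
  obtain ⟨p, hpK, hpmin⟩ := hKc.exists_isMinOn ⟨w, hwK⟩ hGc.continuousOn
  refine ⟨p, fun x => ?_⟩
  by_cases hx : x ∈ Metric.closedBall w R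
  · exact hpmin hx
  · have hr : R < ‖x - w‖ := by
      simpa [Metric.mem_closedBall, dist_eq_norm, not_le] using hx
    have h1 : f w - f x ≤ L * ‖x - w‖ := by
      rw [norm_sub_rev x w]; exact hl w x
    have h2 : proxObj η f w w ≤ proxObj η f w x := by
      simp only [proxObj, sub_self, norm_zero]
      have hxw : 0 < ‖x - w‖ := lt_of_le_of_lt hR0 hr
      have h3 : L * ‖x - w‖ ≤ ‖x - w‖ ^ 2 / (2 * η) := by
        rw [le_div_iff₀ (by positivity)]
        nlinarith
      have h4 : (0:ℝ) ^ 2 / (2 * η) = 0 := by norm_num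
      rw [h4]
      linarith
    exact le_trans (hpmin hwK) h2

theorem prox_spec [FiniteDimensional ℝ E] {η L : ℝ} (hη : 0 < η) (hL0 : 0 ≤ L)
    {f : E → ℝ} (hl : ∀ a b, f a - f b ≤ L * ‖a - b‖) (w : E) :
    ∀ x, proxObj η f w (proxPt η f w) ≤ proxObj η f w x :=
  Classical.epsilon_spec (prox_exists hη hL0 hl w)

theorem prox_unique {η : ℝ} (hη : 0 < η) {f : E → ℝ} (hc : ConvexOn ℝ Set.univ f)
    {w p q : E} (hp : ∀ x, proxObj η f w p ≤ proxObj η f w x)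
    (hq : ∀ x, proxObj η f w q ≤ proxObj η f w x) : p = q := by
  by_contra hne
  set m := (1/2 : ℝ) • p + (1/2 : ℝ) • q with hm
  have hfm : f m ≤ (1/2 : ℝ) * f p + (1/2 : ℝ) * f q :=
    hc.2 (Set.mem_univ p) (Set.mem_univ q) (by norm_num) (by norm_num) (by norm_num)
  have hmw : m - w = (1/2 : ℝ) • ((p - w) + (q - w)) := by
    rw [hm]; module
  have hnorm : ‖m - w‖ ^ 2 = ‖(p - w) + (q - w)‖ ^ 2 / 4 := by
    rw [hmw, norm_smul]
    simp [mul_pow]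
    ring
  have hpar := parallelogram_law_with_norm ℝ (p - w) (q - w)
  have hpq : (p - w) - (q - w) = p - q := by abel
  have hpqpos : 0 < ‖p - q‖ := by
    rw [norm_pos_iff, sub_ne_zero]; exact hne
  have h1 := hp m
  have h2 := hq m
  have h3 := hp q
  have h4 := hq p
  simp only [proxObj] at h1 h2 h3 h4
  rw [hnorm] at h1 h2
  rw [hpq] at hpar
  have hη2 : 0 < 2 * η := by positivity
  have e1 : ‖p - w‖ * ‖p - w‖ = ‖p - w‖ ^ 2 := by ring
  have e2 : ‖q - w‖ * ‖q - w‖ = ‖q - w‖ ^ 2 := by ring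
  have e3 : ‖p - q‖ * ‖p - q‖ = ‖p - q‖ ^ 2 := by ring
  have e4 : ‖(p-w) + (q-w)‖ * ‖(p-w) + (q-w)‖ = ‖(p-w) + (q-w)‖ ^ 2 := by ring
  have e5 : 2 * (‖(p-w)+(q-w)‖^2/4/(2*η)) = (‖(p-w)+(q-w)‖^2/2)/(2*η) := by ring
  have h5 : (‖p - w‖ ^ 2 + ‖q - w‖ ^ 2)/(2*η) ≤ (‖(p-w)+(q-w)‖^2/2)/(2*η) := by
    have e6 : (‖p - w‖ ^ 2 + ‖q - w‖ ^ 2)/(2*η) = ‖p - w‖ ^ 2/(2*η) + ‖q - w‖ ^ 2/(2*η) := by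
      ring
    linarith [e5, e6]
  have h6 : ‖p - w‖ ^ 2 + ‖q - w‖ ^ 2 ≤ ‖(p-w)+(q-w)‖^2/2 := by
    have := (div_le_div_iff_of_pos_right hη2).mp h5
    exact this
  have h7 : 0 < ‖p - q‖ ^ 2 := pow_pos hpqpos 2
  linarith

theorem prox_isSubgrad [FiniteDimensional ℝ E] {η L : ℝ} (hη : 0 < η) (hL0 : 0 ≤ L)
    {f : E → ℝ} (hc : ConvexOn ℝ Set.univ f)
    (hl : ∀ a b, f a - f b ≤ L * ‖a - b‖) (w : E) :
    IsSubgrad f (proxPt η f w) (η⁻¹ • (w - proxPt η f w)) := by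
  intro v
  set p := proxPt η f w with hp
  have hspec := prox_spec hη hL0 hl w
  rw [real_inner_smul_left]
  -- key: for all t ∈ (0,1], f p + ⟪w - p, v - p⟫/η ≤ f v + t * ‖v - p‖^2/(2*η)
  have key : ∀ t : ℝ, 0 < t → t ≤ 1 →
      f p + η⁻¹ * ⟪w - p, v - p⟫ ≤ f v + t * ‖v - p‖ ^ 2 / (2 * η) := by
    intro t ht0 ht1
    have hx := hspec ((1 - t) • p + t • v)
    have hfx : f ((1 - t) • p + t • v) ≤ (1 - t) * f p + t * f v :=
      hc.2 (Set.mem_univ p) (Set.mem_univ v) (by linarith) (le_of_lt ht0) (by ring)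
    have hxw : ((1 - t) • p + t • v) - w = (p - w) + t • (v - p) := by module
    have hnorm : ‖((1 - t) • p + t • v) - w‖ ^ 2
        = ‖p - w‖ ^ 2 + 2 * t * ⟪p - w, v - p⟫ + t ^ 2 * ‖v - p‖ ^ 2 := by
      rw [hxw, norm_add_sq_real, real_inner_smul_right, norm_smul]
      simp [abs_of_pos ht0, mul_pow]
      ring
    simp only [proxObj] at hx
    rw [hnorm] at hx
    have hwp : ⟪w - p, v - p⟫ = -⟪p - w, v - p⟫ := by
      rw [← inner_neg_left]; congr 1; abel
    -- from hx: f p + ‖p-w‖²/2η ≤ (1-t) f p + t f v + (‖p-w‖² + 2t⟪p-w,v-p⟫ + t²‖v-p‖²)/(2η)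
    have h2 : t * f p ≤ t * f v + (2 * t * ⟪p - w, v - p⟫ + t ^ 2 * ‖v - p‖ ^ 2) / (2 * η) := by
      have e : (‖p - w‖ ^ 2 + 2 * t * ⟪p - w, v - p⟫ + t ^ 2 * ‖v - p‖ ^ 2) / (2 * η)
          = ‖p - w‖ ^ 2 / (2 * η)
            + (2 * t * ⟪p - w, v - p⟫ + t ^ 2 * ‖v - p‖ ^ 2) / (2 * η) := by ring
      rw [e] at hx
      linarith [hfx]
    -- divide by t
    have h3 : f p ≤ f v + (2 * ⟪p - w, v - p⟫ + t * ‖v - p‖ ^ 2) / (2 * η) := by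
      have e : (2 * t * ⟪p - w, v - p⟫ + t ^ 2 * ‖v - p‖ ^ 2) / (2 * η)
          = t * ((2 * ⟪p - w, v - p⟫ + t * ‖v - p‖ ^ 2) / (2 * η)) := by ring
      rw [e] at h2
      have := (mul_le_mul_iff_right₀ ht0).mp (by linarith [h2] :
        t * f p ≤ t * (f v + (2 * ⟪p - w, v - p⟫ + t * ‖v - p‖ ^ 2) / (2 * η)))
      exact this
    rw [hwp]
    have e2 : (2 * ⟪p - w, v - p⟫ + t * ‖v - p‖ ^ 2) / (2 * η)
        = η⁻¹ * ⟪p - w, v - p⟫ + t * ‖v - p‖ ^ 2 / (2 * η) := by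
      field_simp
    rw [e2] at h3
    linarith
  -- take t → 0
  by_contra hcon
  push_neg at hcon
  set X := ‖v - p‖ ^ 2 with hX
  have hX0 : 0 ≤ X := sq_nonneg _
  set ε := f p + η⁻¹ * ⟪w - p, v - p⟫ - f v with hε
  have hε0 : 0 < ε := by simp only [hε]; linarith
  set t := min 1 (ε * (2 * η) / (X + 1)) with ht
  have htpos : 0 < t := lt_min one_pos (by positivity)
  have ht1 : t ≤ 1 := min_le_left _ _
  have hk := key t htpos ht1
  have hεle : ε ≤ t * X / (2 * η) := by linarith
  have h1 : t ≤ ε * (2 * η) / (X + 1) := min_le_right _ _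
  have h2 : t * X ≤ ε * (2 * η) / (X + 1) * X :=
    mul_le_mul_of_nonneg_right h1 hX0
  have h3 : t * X / (2 * η) ≤ ε * X / (X + 1) := by
    have e : ε * (2 * η) / (X + 1) * X / (2 * η) = ε * X / (X + 1) := by
      field_simp
    calc t * X / (2 * η) ≤ ε * (2 * η) / (X + 1) * X / (2 * η) :=
          div_le_div_of_nonneg_right h2 (by positivity)
      _ = ε * X / (X + 1) := e
  have h4 : ε * X / (X + 1) < ε := by
    rw [div_lt_iff₀ (by positivity)]
    nlinarith
  linarith

theorem prox_step_eq {η : ℝ} (hη : 0 < η) (f : E → ℝ) (w : E) :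
    w - η • (η⁻¹ • (w - proxPt η f w)) = proxPt η f w := by
  rw [smul_smul, mul_inv_cancel₀ (ne_of_gt hη), one_smul]
  abel



variable {E : Type*} [NormedAddCommGroup E] [InnerProductSpace ℝ E]

end Prox

section ProxMeas

variable {E : Type*} [NormedAddCommGroup E] [InnerProductSpace ℝ E]

theorem ciInf_le_of_mem_closure {φ : E → ℝ} (hφ : Continuous φ) {v : ℕ → E}
    (hb : BddBelow (Set.range fun k => φ (v k))) {x : E}
    (hx : x ∈ closure (Set.range v)) : (⨅ k, φ (v k)) ≤ φ x := by
  by_contra h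
  push_neg at h
  set ε := ((⨅ k, φ (v k)) - φ x) / 2 with hε
  have hε0 : 0 < ε := by simp only [hε]; linarith
  have hU : IsOpen (φ ⁻¹' Set.Iio (φ x + ε)) := hφ.isOpen_preimage _ isOpen_Iio
  have hxU : x ∈ φ ⁻¹' Set.Iio (φ x + ε) := by simp [Set.mem_preimage]; linarith
  obtain ⟨y, hyU, hyr⟩ := mem_closure_iff.mp hx _ hU hxU
  obtain ⟨k, rfl⟩ := hyr
  have h1 : φ (v k) < φ x + ε := hyU
  have h2 : (⨅ k, φ (v k)) ≤ φ (v k) := ciInf_le hb k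
  simp only [hε] at h1
  linarith


variable [FiniteDimensional ℝ E] [SecondCountableTopology E] [MeasurableSpace E] [BorelSpace E]
  {Θ : Type*} [MeasurableSpace Θ]

theorem attains_min_on_closed {η L : ℝ} (hη : 0 < η) (hL0 : 0 ≤ L)
    {f : E → ℝ} (hl : ∀ a b, f a - f b ≤ L * ‖a - b‖) (w : E)
    {C : Set E} (hC : IsClosed C) (c₀ : E) (hc₀ : c₀ ∈ C) :
    ∃ c ∈ C, ∀ x ∈ C, proxObj η f w c ≤ proxObj η f w x := by
  have hfc : Continuous f := (lipschitzWith_of_le hL0 hl).continuous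
  have hGc : Continuous (proxObj η f w) := by
    apply hfc.add
    exact (((continuous_id.sub continuous_const).norm.pow 2).div_const _)
  set R := ‖c₀ - w‖ + 2 * η * L + 1 with hR
  have hr₀R : ‖c₀ - w‖ ≤ R := by
    have : 0 ≤ 2 * η * L := by positivity
    simp only [hR]; linarith
  set K' := C ∩ Metric.closedBall w R with hK'
  have hK'c : IsCompact K' := (isCompact_closedBall w R).inter_left hC
  have hc₀K' : c₀ ∈ K' := ⟨hc₀, by simpa [Metric.mem_closedBall, dist_eq_norm] using hr₀R⟩
  obtain ⟨c, hcK', hcmin⟩ := hK'c.exists_isMinOn ⟨c₀, hc₀K'⟩ hGc.continuousOn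
  refine ⟨c, hcK'.1, fun x hx => ?_⟩
  by_cases hxB : x ∈ Metric.closedBall w R
  · exact hcmin ⟨hx, hxB⟩
  · have hr : R < ‖x - w‖ := by
      simpa [Metric.mem_closedBall, dist_eq_norm, not_le] using hxB
    have h1 : f w - f x ≤ L * ‖x - w‖ := by rw [norm_sub_rev x w]; exact hl w x
    have h2 : f c₀ - f w ≤ L * ‖c₀ - w‖ := hl c₀ w
    have hxw : 0 < ‖x - w‖ := lt_of_le_of_lt (by positivity) hr
    have hkey : proxObj η f w c₀ ≤ proxObj η f w x := by
      simp only [proxObj]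
      have key : 0 ≤ (‖x - w‖ - ‖c₀ - w‖ - 2*η*L) * (‖x - w‖ + ‖c₀ - w‖) := by
        apply mul_nonneg
        · simp only [hR] at hr; linarith
        · positivity
      have hbase : ‖c₀ - w‖^2 + 2*η*L*‖c₀ - w‖ + 2*η*L*‖x - w‖ ≤ ‖x - w‖^2 := by
        nlinarith [key]
      have hdiv : (‖c₀ - w‖^2 + 2*η*L*‖c₀ - w‖ + 2*η*L*‖x - w‖) / (2*η) ≤ ‖x - w‖^2 / (2*η) :=
        (div_le_div_iff_of_pos_right (by positivity)).mpr hbase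
      have e : (‖c₀ - w‖^2 + 2*η*L*‖c₀ - w‖ + 2*η*L*‖x - w‖) / (2*η)
          = ‖c₀ - w‖^2/(2*η) + L*‖c₀ - w‖ + L*‖x - w‖ := by
        field_simp
      rw [e] at hdiv
      linarith
    exact le_trans (hcmin hc₀K') hkey

theorem measurable_proxPt {K : Θ → E → ℝ} {ψ : Θ → E} {η L : ℝ} (hη : 0 < η) (hL0 : 0 ≤ L)
    (hKmeas : ∀ x, Measurable fun θ => K θ x)
    (hKconv : ∀ θ, ConvexOn ℝ Set.univ (K θ))
    (hKlip : ∀ θ a b, K θ a - K θ b ≤ L * ‖a - b‖)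
    (hψ : Measurable ψ) :
    Measurable fun θ => proxPt η (K θ) (ψ θ) := by
  set P : Θ → E := fun θ => proxPt η (K θ) (ψ θ) with hP
  set H : Θ → E → ℝ := fun θ x => proxObj η (K θ) (ψ θ) x with hH
  have hHmeas : ∀ x, Measurable fun θ => H θ x := by
    intro x
    apply (hKmeas x).add
    exact ((measurable_const.sub hψ).norm.pow_const 2).div_const _
  have hHcont : ∀ θ, Continuous (H θ) := by
    intro θ
    apply ((lipschitzWith_of_le hL0 (hKlip θ)).continuous).add
    exact (((continuous_id.sub continuous_const).norm.pow 2).div_const _)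
  have hPspec : ∀ θ x, H θ (P θ) ≤ H θ x := fun θ => prox_spec hη hL0 (hKlip θ) (ψ θ)
  -- lower bound for H θ
  have hHlb : ∀ θ x, K θ (ψ θ) - η * L ^ 2 / 2 ≤ H θ x := by
    intro θ x
    have h1 : K θ (ψ θ) - K θ x ≤ L * ‖ψ θ - x‖ := hKlip θ (ψ θ) x
    rw [norm_sub_rev] at h1
    have h2 : L * ‖x - ψ θ‖ - η * L ^ 2 / 2 ≤ ‖x - ψ θ‖ ^ 2 / (2 * η) := by
      rw [sub_le_iff_le_add, div_add' _ _ _ (by positivity : (2:ℝ)*η ≠ 0),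
        le_div_iff₀ (by positivity)]
      nlinarith [sq_nonneg (‖x - ψ θ‖ - η * L)]
    simp only [hH, proxObj]
    linarith
  apply measurable_of_isClosed
  intro C hC
  rcases C.eq_empty_or_nonempty with rfl | hCne
  · simp
  haveI : Nonempty C := hCne.to_subtype
  set u : ℕ → E := fun k => (TopologicalSpace.denseSeq C k : E) with hu
  have hudense : ∀ x ∈ C, x ∈ closure (Set.range u) := by
    intro x hx
    have h1 : (⟨x, hx⟩ : C) ∈ closure (Set.range (TopologicalSpace.denseSeq C)) := by
      rw [(TopologicalSpace.denseRange_denseSeq C).closure_range]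
      trivial
    have h2 := (image_closure_subset_closure_image continuous_subtype_val)
      (Set.mem_image_of_mem Subtype.val h1)
    have e : Set.range u = Subtype.val '' Set.range (TopologicalSpace.denseSeq C) := by
      rw [← Set.range_comp]
      rfl
    rw [e]
    exact h2
  obtain ⟨v, hvdense⟩ := TopologicalSpace.exists_dense_seq E
  have huC : ∀ k, u k ∈ C := fun k => (TopologicalSpace.denseSeq C k).2
  set mC : Θ → ℝ := fun θ => ⨅ k, H θ (u k) with hmC
  set mU : Θ → ℝ := fun θ => ⨅ k, H θ (v k) with hmU
  have hmCmeas : Measurable mC := Measurable.iInf fun k => hHmeas (u k)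
  have hmUmeas : Measurable mU := Measurable.iInf fun k => hHmeas (v k)
  have hbddC : ∀ θ, BddBelow (Set.range fun k => H θ (u k)) := by
    intro θ
    exact ⟨K θ (ψ θ) - η * L ^ 2 / 2, by rintro y ⟨k, rfl⟩; exact hHlb θ (u k)⟩
  have hbddU : ∀ θ, BddBelow (Set.range fun k => H θ (v k)) := by
    intro θ
    exact ⟨K θ (ψ θ) - η * L ^ 2 / 2, by rintro y ⟨k, rfl⟩; exact hHlb θ (v k)⟩
  have hseteq : P ⁻¹' C = {θ | mC θ ≤ mU θ} := by
    ext θ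
    simp only [Set.mem_preimage, Set.mem_setOf_eq]
    constructor
    · intro hPC
      have h1 : mC θ ≤ H θ (P θ) :=
        ciInf_le_of_mem_closure (hHcont θ) (hbddC θ) (hudense _ hPC)
      have h2 : H θ (P θ) ≤ mU θ := le_ciInf fun k => hPspec θ (v k)
      linarith
    · intro hle
      obtain ⟨c, hcC, hcmin⟩ := attains_min_on_closed hη hL0 (hKlip θ) (ψ θ) hC
        hCne.choose hCne.choose_spec
      have h1 : H θ c ≤ mC θ := le_ciInf fun k => hcmin (u k) (huC k)
      have h2 : mU θ ≤ H θ (P θ) := by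
        apply ciInf_le_of_mem_closure (hHcont θ) (hbddU θ)
        rw [hvdense.closure_range]
        trivial
      have hglobal : ∀ x, H θ c ≤ H θ x := fun x =>
        le_trans (le_trans (le_trans h1 hle) h2) (hPspec θ x)
      have : c = P θ := prox_unique hη (hKconv θ) hglobal (hPspec θ)
      rw [← this]
      exact hcC
  rw [hseteq]
  exact measurableSet_le hmCmeas hmUmeas

end ProxMeas

section Proj

variable {E : Type*} [NormedAddCommGroup E] [InnerProductSpace ℝ E]

theorem le_zero_of_forall_le_smul {a b : ℝ} (hb : 0 ≤ b)
    (h : ∀ t : ℝ, 0 < t → t ≤ 1 → a ≤ t * b) : a ≤ 0 := by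
  by_contra h0
  push_neg at h0
  rcases eq_or_lt_of_le hb with hb0 | hb0
  · have := h 1 one_pos le_rfl
    rw [← hb0] at this
    linarith
  · have ht := h (min 1 (a / (2 * b))) (lt_min one_pos (by positivity)) (min_le_left _ _)
    have h2 : min 1 (a / (2 * b)) * b ≤ (a / (2 * b)) * b :=
      mul_le_mul_of_nonneg_right (min_le_right _ _) hb
    have h3 : (a / (2 * b)) * b = a / 2 := by field_simp
    linarith

theorem proj_fix {𝒲 : Set E} {proj : E → E}
    (hproj_near : ∀ x, ∀ w ∈ 𝒲, ‖x - proj x‖ ≤ ‖x - w‖) {w : E} (hw : w ∈ 𝒲) :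
    proj w = w := by
  have h := hproj_near w w hw
  simp only [sub_self, norm_zero] at h
  have : w - proj w = 0 := norm_le_zero_iff.mp h
  have := sub_eq_zero.mp this
  exact this.symm

theorem proj_var {𝒲 : Set E} (h𝒲conv : Convex ℝ 𝒲) {proj : E → E}
    (hproj_mem : ∀ x, proj x ∈ 𝒲)
    (hproj_near : ∀ x, ∀ w ∈ 𝒲, ‖x - proj x‖ ≤ ‖x - w‖) (x : E) :
    ∀ w ∈ 𝒲, ⟪x - proj x, w - proj x⟫ ≤ 0 := by
  intro w hw
  have key : 2 * ⟪x - proj x, w - proj x⟫ ≤ 0 := by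
    apply le_zero_of_forall_le_smul (sq_nonneg ‖w - proj x‖)
    intro t ht0 ht1
    have hmem : (1 - t) • (proj x) + t • w ∈ 𝒲 :=
      h𝒲conv (hproj_mem x) hw (by linarith) (le_of_lt ht0) (by ring)
    have h1 := hproj_near x _ hmem
    set q := x - proj x with hq
    set r := w - proj x with hrr
    have e : x - ((1 - t) • (proj x) + t • w) = q - t • r := by
      rw [hq, hrr]; module
    clear_value q r
    rw [e] at h1
    have h2 : ‖q‖ ^ 2 ≤ ‖q - t • r‖ ^ 2 := by
      have := pow_le_pow_left₀ (norm_nonneg _) h1 2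
      exact this
    rw [norm_sub_sq_real, real_inner_smul_right, norm_smul] at h2
    simp only [Real.norm_eq_abs, abs_of_pos ht0, mul_pow] at h2
    have h3 : 2 * t * ⟪q, r⟫ ≤ t ^ 2 * ‖r‖ ^ 2 := by linarith
    have h4 : t * (2 * ⟪q, r⟫) ≤ t * (t * ‖r‖ ^ 2) := by
      ring_nf
      ring_nf at h3
      linarith
    exact (mul_le_mul_iff_right₀ ht0).mp h4
  linarith

theorem proj_nonexp {𝒲 : Set E} (h𝒲conv : Convex ℝ 𝒲) {proj : E → E}
    (hproj_mem : ∀ x, proj x ∈ 𝒲)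
    (hproj_near : ∀ x, ∀ w ∈ 𝒲, ‖x - proj x‖ ≤ ‖x - w‖) (x y : E) :
    ‖proj x - proj y‖ ≤ ‖x - y‖ := by
  have h1 := proj_var h𝒲conv hproj_mem hproj_near x (proj y) (hproj_mem y)
  have h2 := proj_var h𝒲conv hproj_mem hproj_near y (proj x) (hproj_mem x)
  have e1 : ⟪x - proj x, proj y - proj x⟫ = -⟪x - proj x, proj x - proj y⟫ := by
    rw [← inner_neg_right]; congr 1; abel
  have key : ‖proj x - proj y‖ ^ 2 ≤ ⟪x - y, proj x - proj y⟫ := by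
    have e2 : ⟪x - y, proj x - proj y⟫
        = ⟪x - proj x, proj x - proj y⟫ + ⟪proj x - proj y, proj x - proj y⟫
          + ⟪proj y - y, proj x - proj y⟫ := by
      rw [← inner_add_left, ← inner_add_left]
      congr 1
      abel
    have e3 : ⟪proj y - y, proj x - proj y⟫ = -⟪y - proj y, proj x - proj y⟫ := by
      rw [← inner_neg_left]; congr 1; abel
    rw [e2, real_inner_self_eq_norm_sq]
    linarith [h1, h2, e1, e3]
  have h3 : ⟪x - y, proj x - proj y⟫ ≤ ‖x - y‖ * ‖proj x - proj y‖ :=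
    real_inner_le_norm _ _
  rcases eq_or_lt_of_le (norm_nonneg (proj x - proj y)) with h0 | h0
  · rw [← h0]; exact norm_nonneg _
  · nlinarith

end Proj

section Steps

variable {E : Type*} [NormedAddCommGroup E] [InnerProductSpace ℝ E]

theorem same_step_core {f : E → ℝ} {x y gx gy : E} {η L : ℝ} (hη : 0 < η)
    (hgx : IsSubgrad f x gx) (hgy : IsSubgrad f (y - η • gy) gy)
    (hgx_norm : ‖gx‖ ≤ L) :
    ‖(x - η • gx) - (y - η • gy)‖ ^ 2 ≤ ‖x - y‖ ^ 2 + η ^ 2 * L ^ 2 := by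
  have expand : ‖(x - η • gx) - (y - η • gy)‖ ^ 2
      = ‖x - y‖ ^ 2 - 2 * η * ⟪gx - gy, x - y⟫ + η ^ 2 * ‖gx - gy‖ ^ 2 := by
    have e : (x - η • gx) - (y - η • gy) = (x - y) - η • (gx - gy) := by module
    rw [e, norm_sub_sq_real, real_inner_smul_right, norm_smul]
    simp only [Real.norm_eq_abs, mul_pow, sq_abs]
    rw [real_inner_comm]
    ring
  have decomp : ⟪gx - gy, x - y⟫
      = ⟪gx - gy, x - (y - η • gy)⟫ - η * ⟪gx - gy, gy⟫ := by
    have e : x - y = (x - (y - η • gy)) + (-η) • gy := by module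
    rw [e, inner_add_right, real_inner_smul_right]
    ring
  have norms : ‖gx - gy‖ ^ 2 = ‖gx‖ ^ 2 - 2 * ⟪gx - gy, gy⟫ - ‖gy‖ ^ 2 := by
    rw [norm_sub_sq_real, inner_sub_left, real_inner_self_eq_norm_sq]
    ring
  have mono : 0 ≤ ⟪gx - gy, x - (y - η • gy)⟫ := hgx.mono hgy
  have hgx2 : ‖gx‖ ^ 2 ≤ L ^ 2 := by
    have := pow_le_pow_left₀ (norm_nonneg gx) hgx_norm 2
    exact this
  have h1 : 0 ≤ 2 * η * ⟪gx - gy, x - (y - η • gy)⟫ := by positivity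
  have h2 : 0 ≤ η ^ 2 * ‖gy‖ ^ 2 := by positivity
  have h3 : η ^ 2 * ‖gx‖ ^ 2 ≤ η ^ 2 * L ^ 2 :=
    mul_le_mul_of_nonneg_left hgx2 (sq_nonneg η)
  rw [expand, decomp, norms]
  ring_nf
  ring_nf at h1 h3 h2
  nlinarith

theorem swap_step_core {f f' : E → ℝ} {y y' gy gy' : E} {η c : ℝ} (hη : 0 < η)
    (hc0 : 0 ≤ c)
    (hgy : IsSubgrad f (y - η • gy) gy) (hgy' : IsSubgrad f' (y' - η • gy') gy')
    (hdiff : ∀ a b, (f a - f' a) - (f b - f' b) ≤ c * ‖a - b‖) :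
    ‖(y - η • gy) - (y' - η • gy')‖ ≤ ‖y - y'‖ + η * c := by
  set p := y - η • gy with hp
  set p' := y' - η • gy' with hp'
  have hsub : -(c * ‖p - p'‖) ≤ ⟪gy - gy', p - p'⟫ := subgrad_diff_bound hgy hgy' hdiff
  have e : y - y' = (p - p') + η • (gy - gy') := by rw [hp, hp']; module
  have key : ‖p - p'‖ ^ 2 = ⟪y - y', p - p'⟫ - η * ⟪gy - gy', p - p'⟫ := by
    rw [e, inner_add_left, real_inner_smul_left, ← real_inner_self_eq_norm_sq]
    ring
  have h1 : ⟪y - y', p - p'⟫ ≤ ‖y - y'‖ * ‖p - p'‖ := real_inner_le_norm _ _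
  have h2 : ‖p - p'‖ ^ 2 ≤ ‖y - y'‖ * ‖p - p'‖ + η * (c * ‖p - p'‖) := by
    have h3 : -(η * ⟪gy - gy', p - p'⟫) ≤ η * (c * ‖p - p'‖) := by
      rw [← mul_neg]
      exact mul_le_mul_of_nonneg_left (by linarith) (le_of_lt hη)
    linarith
  rcases eq_or_lt_of_le (norm_nonneg (p - p')) with h0 | h0
  · rw [← h0]
    positivity
  · nlinarith

end Steps

section Algo

variable {E : Type*} [NormedAddCommGroup E] [InnerProductSpace ℝ E]
variable {𝒵 : Type*} [MeasurableSpace 𝒵]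

/-- empirical loss -/
noncomputable def FF (ℓ : E → 𝒵 → ℝ) (n : ℕ) (s : Fin n → 𝒵) (x : E) : ℝ :=
  (n : ℝ)⁻¹ * ∑ i, ℓ x (s i)

/-- canonical (projected proximal-point) trajectory -/
noncomputable def traj (ℓ : E → 𝒵 → ℝ) (n : ℕ) (η : ℝ) (proj : E → E) (w₀ : E) :
    ℕ → (Fin n → 𝒵) → E
  | 0 => fun _ => w₀
  | (t + 1) => fun s =>
      proj (proxPt η (FF ℓ n s) (traj ℓ n η proj w₀ t s))

variable {ℓ : E → 𝒵 → ℝ} {n : ℕ} {L : ℝ≥0} {η : ℝ} {proj : E → E} {w₀ : E}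

theorem FF_lip (hn : 0 < n) (hLip : ∀ z, LipschitzWith L fun w => ℓ w z) :
    ∀ (s : Fin n → 𝒵) (a b : E), FF ℓ n s a - FF ℓ n s b ≤ (L : ℝ) * ‖a - b‖ := by
  intro s a b
  have key : ∀ i : Fin n, ℓ a (s i) - ℓ b (s i) ≤ (L : ℝ) * ‖a - b‖ := by
    intro i
    have := (hLip (s i)).dist_le_mul a b
    rw [Real.dist_eq, dist_eq_norm] at this
    exact le_trans (le_abs_self _) this
  have h1 : ∑ i, ℓ a (s i) - ∑ i, ℓ b (s i) ≤ n * ((L : ℝ) * ‖a - b‖) := by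
    rw [← Finset.sum_sub_distrib]
    calc ∑ i, (ℓ a (s i) - ℓ b (s i)) ≤ ∑ _i : Fin n, (L : ℝ) * ‖a - b‖ :=
          Finset.sum_le_sum fun i _ => key i
      _ = n * ((L : ℝ) * ‖a - b‖) := by
          rw [Finset.sum_const, Finset.card_univ, Fintype.card_fin, nsmul_eq_mul]
  have hn' : (0 : ℝ) < n := by exact_mod_cast hn
  rw [FF, FF, ← mul_sub]
  calc (n : ℝ)⁻¹ * (∑ i, ℓ a (s i) - ∑ i, ℓ b (s i))
      ≤ (n : ℝ)⁻¹ * (n * ((L : ℝ) * ‖a - b‖)) := by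
        apply mul_le_mul_of_nonneg_left h1 (by positivity)
    _ = (L : ℝ) * ‖a - b‖ := by field_simp
  
theorem FF_conv (hconv : ∀ z, ConvexOn ℝ Set.univ fun w => ℓ w z) (s : Fin n → 𝒵) :
    ConvexOn ℝ Set.univ (FF ℓ n s) := by
  constructor
  · exact convex_univ
  · intro x _ y _ a b ha hb hab
    simp only [FF]
    have h1 : ∑ i, ℓ (a • x + b • y) (s i) ≤ ∑ i, (a * ℓ x (s i) + b * ℓ y (s i)) :=
      Finset.sum_le_sum fun i _ =>
        (hconv (s i)).2 (Set.mem_univ x) (Set.mem_univ y) ha hb hab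
    have h2 : (n : ℝ)⁻¹ * ∑ i, ℓ (a • x + b • y) (s i)
        ≤ (n : ℝ)⁻¹ * ∑ i, (a * ℓ x (s i) + b * ℓ y (s i)) :=
      mul_le_mul_of_nonneg_left h1 (by positivity)
    calc (n : ℝ)⁻¹ * ∑ i, ℓ (a • x + b • y) (s i)
        ≤ (n : ℝ)⁻¹ * ∑ i, (a * ℓ x (s i) + b * ℓ y (s i)) := h2
      _ = a * ((n : ℝ)⁻¹ * ∑ i, ℓ x (s i)) + b * ((n : ℝ)⁻¹ * ∑ i, ℓ y (s i)) := by
          rw [Finset.sum_add_distrib, ← Finset.mul_sum, ← Finset.mul_sum]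
          ring

theorem FF_meas [MeasurableSpace E] (hℓmeas : Measurable fun p : E × 𝒵 => ℓ p.1 p.2) (x : E) :
    Measurable fun s : Fin n → 𝒵 => FF ℓ n s x := by
  apply Measurable.const_mul
  apply Finset.measurable_sum
  intro i _
  exact hℓmeas.comp (measurable_const.prodMk (measurable_pi_apply i))

theorem FF_diff (hn : 0 < n) (hLip : ∀ z, LipschitzWith L fun w => ℓ w z)
    {s s' : Fin n → 𝒵} {i : Fin n} (hss' : ∀ j, j ≠ i → s j = s' j) :
    ∀ a b : E, (FF ℓ n s a - FF ℓ n s' a) - (FF ℓ n s b - FF ℓ n s' b)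
      ≤ (2 * (L : ℝ) / n) * ‖a - b‖ := by
  intro a b
  have hn' : (0 : ℝ) < n := by exact_mod_cast hn
  have e : ∀ x : E, FF ℓ n s x - FF ℓ n s' x = (n : ℝ)⁻¹ * (ℓ x (s i) - ℓ x (s' i)) := by
    intro x
    rw [FF, FF, ← mul_sub, ← Finset.sum_sub_distrib]
    congr 1
    rw [Finset.sum_eq_single i]
    · intro j _ hj
      rw [hss' j hj, sub_self]
    · intro h
      exact absurd (Finset.mem_univ i) h
  rw [e a, e b]
  have hL1 : ℓ a (s i) - ℓ b (s i) ≤ (L : ℝ) * ‖a - b‖ := by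
    have := (hLip (s i)).dist_le_mul a b
    rw [Real.dist_eq, dist_eq_norm] at this
    exact le_trans (le_abs_self _) this
  have hL2 : ℓ b (s' i) - ℓ a (s' i) ≤ (L : ℝ) * ‖a - b‖ := by
    have := (hLip (s' i)).dist_le_mul b a
    rw [Real.dist_eq, dist_eq_norm, norm_sub_rev] at this
    exact le_trans (le_abs_self _) this
  have key : (ℓ a (s i) - ℓ a (s' i)) - (ℓ b (s i) - ℓ b (s' i))
      ≤ 2 * (L : ℝ) * ‖a - b‖ := by linarith
  calc (n : ℝ)⁻¹ * (ℓ a (s i) - ℓ a (s' i)) - (n : ℝ)⁻¹ * (ℓ b (s i) - ℓ b (s' i))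
      = (n : ℝ)⁻¹ * ((ℓ a (s i) - ℓ a (s' i)) - (ℓ b (s i) - ℓ b (s' i))) := by ring
    _ ≤ (n : ℝ)⁻¹ * (2 * (L : ℝ) * ‖a - b‖) :=
        mul_le_mul_of_nonneg_left key (by positivity)
    _ = (2 * (L : ℝ) / n) * ‖a - b‖ := by field_simp

theorem traj_mem {𝒲 : Set E} (hw₀ : w₀ ∈ 𝒲) (hproj_mem : ∀ x, proj x ∈ 𝒲) :
    ∀ (t : ℕ) (s : Fin n → 𝒵), traj ℓ n η proj w₀ t s ∈ 𝒲 := by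
  intro t s
  cases t with
  | zero => exact hw₀
  | succ t => exact hproj_mem _

theorem traj_meas [FiniteDimensional ℝ E] [SecondCountableTopology E]
    [MeasurableSpace E] [BorelSpace E]
    (hη : 0 < η) (hn : 0 < n)
    (hℓmeas : Measurable fun p : E × 𝒵 => ℓ p.1 p.2)
    (hconv : ∀ z, ConvexOn ℝ Set.univ fun w => ℓ w z)
    (hLip : ∀ z, LipschitzWith L fun w => ℓ w z)
    (hprojmeas : Measurable proj) :
    ∀ t : ℕ, Measurable (traj ℓ n η proj w₀ t) := by
  intro t
  induction t with
  | zero => exact measurable_const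
  | succ t ih =>
      show Measurable fun s => proj (proxPt η (FF ℓ n s) (traj ℓ n η proj w₀ t s))
      apply hprojmeas.comp
      exact measurable_proxPt hη L.2 (fun x => FF_meas hℓmeas x)
        (fun s => FF_conv hconv s) (fun s => FF_lip hn hLip s) ih

theorem traj_swap {𝒲 : Set E} [FiniteDimensional ℝ E]
    (h𝒲conv : Convex ℝ 𝒲) (hproj_mem : ∀ x, proj x ∈ 𝒲)
    (hproj_near : ∀ x, ∀ w ∈ 𝒲, ‖x - proj x‖ ≤ ‖x - w‖)
    (hη : 0 < η) (hn : 0 < n)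
    (hconv : ∀ z, ConvexOn ℝ Set.univ fun w => ℓ w z)
    (hLip : ∀ z, LipschitzWith L fun w => ℓ w z)
    {s s' : Fin n → 𝒵} {i : Fin n} (hss' : ∀ j, j ≠ i → s j = s' j) :
    ∀ t : ℕ, ‖traj ℓ n η proj w₀ t s - traj ℓ n η proj w₀ t s'‖
      ≤ 2 * η * (L : ℝ) * t / n := by
  intro t
  induction t with
  | zero => simp [traj]
  | succ t ih =>
      set y := traj ℓ n η proj w₀ t s with hy
      set y' := traj ℓ n η proj w₀ t s' with hy'
      set f := FF ℓ n s with hf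
      set f' := FF ℓ n s' with hf'
      set p := proxPt η f y with hp
      set p' := proxPt η f' y' with hp'
      have hgy : IsSubgrad f (y - η • (η⁻¹ • (y - p))) (η⁻¹ • (y - p)) := by
        rw [hp, prox_step_eq hη f y]
        exact prox_isSubgrad hη L.2 (FF_conv hconv s) (FF_lip hn hLip s) y
      have hgy' : IsSubgrad f' (y' - η • (η⁻¹ • (y' - p'))) (η⁻¹ • (y' - p')) := by
        rw [hp', prox_step_eq hη f' y']
        exact prox_isSubgrad hη L.2 (FF_conv hconv s') (FF_lip hn hLip s') y'
      have hc0 : (0 : ℝ) ≤ 2 * (L : ℝ) / n := by positivity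
      have hstep := swap_step_core hη hc0 hgy hgy' (FF_diff hn hLip hss')
      rw [prox_step_eq hη f y, prox_step_eq hη f' y'] at hstep
      rw [← hp, ← hp'] at hstep
      have hT : traj ℓ n η proj w₀ (t + 1) s = proj p := by
        rw [hp, hf, hy]; rfl
      have hT' : traj ℓ n η proj w₀ (t + 1) s' = proj p' := by
        rw [hp', hf', hy']; rfl
      rw [hT, hT']
      have hne := proj_nonexp h𝒲conv hproj_mem hproj_near p p'
      have harith : 2 * η * (L : ℝ) * t / n + η * (2 * (L : ℝ) / n)
          = 2 * η * (L : ℝ) * (t + 1 : ℕ) / n := by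
        push_cast
        ring
      linarith [hne, hstep, ih, harith]

theorem run_same {𝒲 : Set E} [FiniteDimensional ℝ E]
    (h𝒲conv : Convex ℝ 𝒲) (hproj_mem : ∀ x, proj x ∈ 𝒲)
    (hproj_near : ∀ x, ∀ w ∈ 𝒲, ‖x - proj x‖ ≤ ‖x - w‖)
    (hη : 0 < η) (hn : 0 < n)
    (hconv : ∀ z, ConvexOn ℝ Set.univ fun w => ℓ w z)
    (hLip : ∀ z, LipschitzWith L fun w => ℓ w z)
    (s : Fin n → 𝒵) (x gx : ℕ → E)
    (hx0 : x 0 = w₀)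
    (hxrec : ∀ t, x (t + 1) = proj (x t - η • gx t))
    (hgx : ∀ t, IsSubgrad (FF ℓ n s) (x t) (gx t)) :
    ∀ t : ℕ, ‖x t - traj ℓ n η proj w₀ t s‖ ^ 2 ≤ t * (η ^ 2 * (L : ℝ) ^ 2) := by
  intro t
  induction t with
  | zero => simp [traj, hx0]
  | succ t ih =>
      set y := traj ℓ n η proj w₀ t s with hy
      set f := FF ℓ n s with hf
      set p := proxPt η f y with hp
      have hgy : IsSubgrad f (y - η • (η⁻¹ • (y - p))) (η⁻¹ • (y - p)) := by
        rw [hp, prox_step_eq hη f y]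
        exact prox_isSubgrad hη L.2 (FF_conv hconv s) (FF_lip hn hLip s) y
      have hgxnorm : ‖gx t‖ ≤ (L : ℝ) :=
        IsSubgrad.norm_le L.2 (hgx t) (FF_lip hn hLip s)
      have hstep := same_step_core hη (hgx t) hgy hgxnorm
      rw [prox_step_eq hη f y, ← hp] at hstep
      have hT : traj ℓ n η proj w₀ (t + 1) s = proj p := by
        rw [hp, hf, hy]; rfl
      rw [hT, hxrec t]
      have hne := proj_nonexp h𝒲conv hproj_mem hproj_near (x t - η • gx t) p
      have hsq : ‖proj (x t - η • gx t) - proj p‖ ^ 2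
          ≤ ‖(x t - η • gx t) - p‖ ^ 2 :=
        pow_le_pow_left₀ (norm_nonneg _) hne 2
      have harith : (t : ℝ) * (η ^ 2 * (L : ℝ) ^ 2) + η ^ 2 * (L : ℝ) ^ 2
          = ((t + 1 : ℕ) : ℝ) * (η ^ 2 * (L : ℝ) ^ 2) := by
        push_cast
        ring
      linarith [hsq, hstep, ih, harith]

end Algo

end GenGDAux



theorem law_vec {Ω 𝒵 : Type*} [MeasureSpace Ω] [IsProbabilityMeasure (ℙ : Measure Ω)]
    [MeasurableSpace 𝒵] {n : ℕ} (μ : Measure 𝒵) [IsProbabilityMeasure μ]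
    (Z : Fin n → Ω → 𝒵) (hZmeas : ∀ i, Measurable (Z i))
    (hiid : iIndepFun Z ℙ)
    (hlaw : ∀ i, Measure.map (Z i) ℙ = μ) :
    Measure.map (fun ω i => Z i ω) ℙ = Measure.pi (fun _ : Fin n => μ) := by
  symm
  apply Measure.pi_eq
  intro s hs
  rw [Measure.map_apply (measurable_pi_lambda _ hZmeas) (MeasurableSet.univ_pi hs)]
  have e : (fun ω i => Z i ω) ⁻¹' (Set.univ.pi s) = ⋂ i ∈ Finset.univ, (Z i) ⁻¹' (s i) := by
    ext ω
    simp [Set.mem_pi]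
  rw [e, hiid.measure_inter_preimage_eq_mul Finset.univ (fun i _ => hs i)]
  exact Finset.prod_congr rfl fun i _ => by
    rw [← hlaw i, Measure.map_apply (hZmeas i) (hs i)]



set_option maxHeartbeats 2000000
open GenGDAux

/-- Generalization of full-batch projected subgradient descent on convex-Lipschitz-bounded
problems: for any CLB problem (`ℓ(·, z)` convex and `L`-Lipschitz, domain `𝒲` closed convex
with diameter at most `D`) and any data distribution `μ`, the terminal iterate `W_T` of
projected subgradient descent with step size `η` started from a fixed `w₀ ∈ 𝒲` satisfies
`E[L_μ(W_T)] − E[L_S(W_T)] ≤ 8L²√T·η + 8L²Tη/n`. Since the theorem is universally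
quantified over the problem and the distribution, the bound holds uniformly over the
class `𝒞_{L,D}` and over all `μ`. -/
theorem gen_gd_clb
    {d n : ℕ} (hn : 0 < n) {Ω 𝒵 : Type*}
    [MeasureSpace Ω] [IsProbabilityMeasure (ℙ : Measure Ω)]
    [MeasurableSpace 𝒵] [StandardBorelSpace 𝒵]
    (μ : Measure 𝒵) [IsProbabilityMeasure μ]
    (Z : Fin n → Ω → 𝒵) (hZmeas : ∀ i, Measurable (Z i))
    (hiid : iIndepFun Z ℙ)
    (hlaw : ∀ i, Measure.map (Z i) ℙ = μ)
    (ℓ : EuclideanSpace ℝ (Fin d) → 𝒵 → ℝ) (L : ℝ≥0) (hL : 0 < (L : ℝ)) (D : ℝ) (hD : 0 < D)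
    (hℓmeas : Measurable (fun p : EuclideanSpace ℝ (Fin d) × 𝒵 => ℓ p.1 p.2))
    (hconv : ∀ z, ConvexOn ℝ Set.univ (fun w => ℓ w z))
    (hLip : ∀ z, LipschitzWith L (fun w => ℓ w z))
    (𝒲 : Set (EuclideanSpace ℝ (Fin d))) (h𝒲ne : 𝒲.Nonempty)
    (h𝒲closed : IsClosed 𝒲) (h𝒲conv : Convex ℝ 𝒲)
    (h𝒲diam : ∀ w ∈ 𝒲, ∀ w' ∈ 𝒲, ‖w - w'‖ ≤ D)
    -- `proj` is the Euclidean projection onto `𝒲`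
    (proj : EuclideanSpace ℝ (Fin d) → EuclideanSpace ℝ (Fin d))
    (hproj_mem : ∀ x, proj x ∈ 𝒲)
    (hproj_near : ∀ x, ∀ w ∈ 𝒲, ‖x - proj x‖ ≤ ‖x - w‖)
    (η : ℝ) (hη : 0 < η) (T : ℕ) (hT : 0 < T)
    (w₀ : EuclideanSpace ℝ (Fin d)) (hw₀ : w₀ ∈ 𝒲)
    -- trajectory and measurable subgradient selection
    (W g : ℕ → Ω → EuclideanSpace ℝ (Fin d))
    (hWmeas : ∀ t, Measurable (W t)) (hgmeas : ∀ t, Measurable (g t))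
    (hsubgrad : ∀ t ω, ∀ v : EuclideanSpace ℝ (Fin d),
      (n : ℝ)⁻¹ * ∑ i, ℓ (W t ω) (Z i ω) + ⟪g t ω, v - W t ω⟫
        ≤ (n : ℝ)⁻¹ * ∑ i, ℓ v (Z i ω))
    (hW0 : ∀ ω, W 0 ω = w₀)
    (hWrec : ∀ t ω, W (t + 1) ω = proj (W t ω - η • g t ω))
    (hint_emp : ∀ i, Integrable (fun ω => ℓ (W T ω) (Z i ω)) ℙ)
    (hint_pop : Integrable (fun ω => ∫ z, ℓ (W T ω) z ∂μ) ℙ)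
    (hint_loss : ∀ w, Integrable (fun z => ℓ w z) μ) :
    (∫ ω, ∫ z, ℓ (W T ω) z ∂μ ∂ℙ) - (∫ ω, (n : ℝ)⁻¹ * ∑ i, ℓ (W T ω) (Z i ω) ∂ℙ)
      ≤ 8 * (L : ℝ) ^ 2 * Real.sqrt T * η + 8 * (L : ℝ) ^ 2 * T * η / n := by

  classical
  have hL0 : (0 : ℝ) ≤ L := le_of_lt hL
  have hn' : (0 : ℝ) < n := by exact_mod_cast hn
  have hT0 : (0 : ℝ) ≤ (T : ℝ) := by positivity
  have hsqT : (0 : ℝ) ≤ Real.sqrt T := Real.sqrt_nonneg _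
  -- projection facts
  have hprojlip : ∀ x y, ‖proj x - proj y‖ ≤ ‖x - y‖ :=
    proj_nonexp h𝒲conv hproj_mem hproj_near
  have hprojmeas : Measurable proj := by
    have h1 : LipschitzWith 1 proj := by
      apply LipschitzWith.of_dist_le_mul
      intro x y
      rw [dist_eq_norm, dist_eq_norm]
      simpa using hprojlip x y
    exact h1.continuous.measurable
  -- canonical trajectory
  set A : (Fin n → 𝒵) → EuclideanSpace ℝ (Fin d) := traj ℓ n η proj w₀ T with hA
  have hAmeas : Measurable A := traj_meas hη hn hℓmeas hconv hLip hprojmeas T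
  have hAmem : ∀ s, A s ∈ 𝒲 := fun s => traj_mem hw₀ hproj_mem T s
  set Zv : Ω → (Fin n → 𝒵) := fun ω i => Z i ω with hZvdef
  have hZvmeas : Measurable Zv := measurable_pi_lambda _ hZmeas
  set ν := Measure.pi (fun _ : Fin n => μ) with hν
  set ρ := Measure.pi (fun _ : Fin (n + 1) => μ) with hρ
  have hZvlaw : Measure.map Zv ℙ = ν := law_vec μ Z hZmeas hiid hlaw
  -- closeness of the given run to the canonical trajectory
  have hsame : ∀ ω, ‖W T ω - A (Zv ω)‖ ≤ Real.sqrt T * (η * L) := by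
    intro ω
    have hgx : ∀ t, IsSubgrad (FF ℓ n (Zv ω)) (W t ω) (g t ω) := by
      intro t v
      exact hsubgrad t ω v
    have h2 := run_same h𝒲conv hproj_mem hproj_near hη hn hconv hLip (Zv ω)
      (fun t => W t ω) (fun t => g t ω) (hW0 ω) (fun t => hWrec t ω) hgx T
    have h3 : ‖W T ω - A (Zv ω)‖ = Real.sqrt (‖W T ω - A (Zv ω)‖ ^ 2) :=
      (Real.sqrt_sq (norm_nonneg _)).symm
    rw [h3]
    calc Real.sqrt (‖W T ω - A (Zv ω)‖ ^ 2)
        ≤ Real.sqrt ((T : ℝ) * (η ^ 2 * (L : ℝ) ^ 2)) := Real.sqrt_le_sqrt h2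
      _ = Real.sqrt T * (η * L) := by
          rw [Real.sqrt_mul hT0, show η ^ 2 * (L : ℝ) ^ 2 = (η * L) ^ 2 by ring,
            Real.sqrt_sq (by positivity)]
  -- population loss
  set Lμf : EuclideanSpace ℝ (Fin d) → ℝ := fun w => ∫ z, ℓ w z ∂μ with hLμf
  have hℓlipR : ∀ z (a b : EuclideanSpace ℝ (Fin d)), ℓ a z - ℓ b z ≤ (L : ℝ) * ‖a - b‖ := by
    intro z a b
    have := (hLip z).dist_le_mul a b
    rw [Real.dist_eq, dist_eq_norm] at this
    exact le_trans (le_abs_self _) this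
  have hLμ_lip : ∀ w w', Lμf w - Lμf w' ≤ (L : ℝ) * ‖w - w'‖ := by
    intro w w'
    rw [hLμf]
    rw [← integral_sub (hint_loss w) (hint_loss w')]
    calc ∫ z, (ℓ w z - ℓ w' z) ∂μ
        ≤ ∫ _z, (L : ℝ) * ‖w - w'‖ ∂μ :=
          integral_mono ((hint_loss w).sub (hint_loss w')) (integrable_const _)
            (fun z => hℓlipR z w w')
      _ = (L : ℝ) * ‖w - w'‖ := by simp
  have hLμ_cont : Continuous Lμf := (lipschitzWith_of_le hL0 hLμ_lip).continuous
  -- uniform bound on 𝒲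
  have hιw0 : Integrable (fun z => |ℓ w₀ z|) μ := (hint_loss w₀).abs
  set C₀ : ℝ := (∫ z, |ℓ w₀ z| ∂μ) + (L : ℝ) * D with hC₀
  have habs : ∀ w ∈ 𝒲, ∀ z, |ℓ w z| ≤ |ℓ w₀ z| + (L : ℝ) * D := by
    intro w hw z
    have h2 := (hLip z).dist_le_mul w w₀
    rw [Real.dist_eq, dist_eq_norm] at h2
    have h3 : ‖w - w₀‖ ≤ D := h𝒲diam w hw w₀ hw₀
    have h4 : |ℓ w z - ℓ w₀ z| ≤ (L : ℝ) * D :=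
      le_trans h2 (mul_le_mul_of_nonneg_left h3 hL0)
    calc |ℓ w z| = |ℓ w₀ z + (ℓ w z - ℓ w₀ z)| := by ring_nf
      _ ≤ |ℓ w₀ z| + |ℓ w z - ℓ w₀ z| := abs_add_le _ _
      _ ≤ |ℓ w₀ z| + (L : ℝ) * D := by linarith
  have hLμ_bdd : ∀ w ∈ 𝒲, |Lμf w| ≤ C₀ := by
    intro w hw
    calc |Lμf w| ≤ ∫ z, |ℓ w z| ∂μ := by
          rw [hLμf]
          simpa [Real.norm_eq_abs] using norm_integral_le_integral_norm (fun z => ℓ w z) (μ := μ)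
      _ ≤ ∫ z, (|ℓ w₀ z| + (L : ℝ) * D) ∂μ :=
          integral_mono (hint_loss w).abs (hιw0.add (integrable_const _)) (habs w hw)
      _ = C₀ := by rw [integral_add hιw0 (integrable_const _)]; simp [hC₀]
  -- step 1
  have hintA1 : Integrable (fun ω => Lμf (A (Zv ω))) ℙ := by
    apply Integrable.mono' (integrable_const C₀)
      ((hLμ_cont.measurable.comp (hAmeas.comp hZvmeas)).aestronglyMeasurable)
    refine Filter.Eventually.of_forall fun ω => ?_
    rw [Real.norm_eq_abs]
    exact hLμ_bdd _ (hAmem _)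
  have step1 : ∫ ω, Lμf (W T ω) ∂ℙ
      ≤ (∫ ω, Lμf (A (Zv ω)) ∂ℙ) + (L : ℝ) * (Real.sqrt T * (η * L)) := by
    have hpt : ∀ ω, Lμf (W T ω) ≤ Lμf (A (Zv ω)) + (L : ℝ) * (Real.sqrt T * (η * L)) := by
      intro ω
      have h1 := hLμ_lip (W T ω) (A (Zv ω))
      have h2 := mul_le_mul_of_nonneg_left (hsame ω) hL0
      linarith
    have h3 := integral_mono hint_pop
      (hintA1.add (integrable_const ((L : ℝ) * (Real.sqrt T * (η * L))))) hpt
    simp only [Pi.add_apply] at h3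
    rwa [integral_add hintA1 (integrable_const ((L : ℝ) * (Real.sqrt T * (η * L)))),
      integral_const, probReal_univ, one_smul] at h3
  -- step 2
  have hw0Zi : ∀ i : Fin n, Integrable (fun ω => |ℓ w₀ (Z i ω)|) ℙ := by
    intro i
    have hm : Measurable (fun z => ℓ w₀ z) := hℓmeas.comp (measurable_const.prodMk measurable_id)
    have h1 : Integrable (fun z => ℓ w₀ z) (Measure.map (Z i) ℙ) := by
      rw [hlaw i]; exact hint_loss w₀
    have h2 := (integrable_map_measure hm.aestronglyMeasurable (hZmeas i).aemeasurable).mp h1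
    exact h2.abs
  set EmpA : Ω → ℝ := fun ω => FF ℓ n (Zv ω) (A (Zv ω)) with hEmpA
  have hEmpAmeas : Measurable EmpA := by
    apply Measurable.const_mul
    apply Finset.measurable_sum
    intro i _
    exact hℓmeas.comp ((hAmeas.comp hZvmeas).prodMk (hZmeas i))
  have hEmpA_bdd : ∀ ω, |EmpA ω| ≤ (n : ℝ)⁻¹ * (∑ i, |ℓ w₀ (Z i ω)|) + (L : ℝ) * D := by
    intro ω
    have h1 : |(n : ℝ)⁻¹ * ∑ i, ℓ (A (Zv ω)) (Z i ω)|
        ≤ (n : ℝ)⁻¹ * ∑ i, |ℓ (A (Zv ω)) (Z i ω)| := by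
      rw [abs_mul, abs_of_nonneg (by positivity : (0:ℝ) ≤ (n : ℝ)⁻¹)]
      exact mul_le_mul_of_nonneg_left (Finset.abs_sum_le_sum_abs _ _) (by positivity)
    have h2 : ∑ i, |ℓ (A (Zv ω)) (Z i ω)| ≤ ∑ i, (|ℓ w₀ (Z i ω)| + (L : ℝ) * D) :=
      Finset.sum_le_sum fun i _ => habs _ (hAmem _) _
    have h3 : ((n : ℝ)⁻¹ * ∑ i, (|ℓ w₀ (Z i ω)| + (L : ℝ) * D))
        = (n : ℝ)⁻¹ * (∑ i, |ℓ w₀ (Z i ω)|) + (L : ℝ) * D := by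
      rw [Finset.sum_add_distrib, Finset.sum_const, Finset.card_univ, Fintype.card_fin,
        nsmul_eq_mul, mul_add]
      congr 1
      field_simp
    calc |EmpA ω| ≤ (n : ℝ)⁻¹ * ∑ i, |ℓ (A (Zv ω)) (Z i ω)| := h1
      _ ≤ (n : ℝ)⁻¹ * ∑ i, (|ℓ w₀ (Z i ω)| + (L : ℝ) * D) :=
          mul_le_mul_of_nonneg_left h2 (by positivity)
      _ = _ := h3
  have hintEmpA : Integrable EmpA ℙ := by
    apply Integrable.mono'
      ((((integrable_finset_sum _ fun i _ => hw0Zi i).const_mul _)).add (integrable_const ((L : ℝ) * D)))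
      hEmpAmeas.aestronglyMeasurable
    exact Filter.Eventually.of_forall fun ω => by
      rw [Real.norm_eq_abs]; exact hEmpA_bdd ω
  have hintEmpW : Integrable (fun ω => (n : ℝ)⁻¹ * ∑ i, ℓ (W T ω) (Z i ω)) ℙ :=
    (integrable_finset_sum _ fun i _ => hint_emp i).const_mul _
  have step2 : ∫ ω, EmpA ω ∂ℙ
      ≤ (∫ ω, (n : ℝ)⁻¹ * ∑ i, ℓ (W T ω) (Z i ω) ∂ℙ) + (L : ℝ) * (Real.sqrt T * (η * L)) := by
    have hpt : ∀ ω, EmpA ω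
        ≤ ((n : ℝ)⁻¹ * ∑ i, ℓ (W T ω) (Z i ω)) + (L : ℝ) * (Real.sqrt T * (η * L)) := by
      intro ω
      have h1 : FF ℓ n (Zv ω) (A (Zv ω)) - FF ℓ n (Zv ω) (W T ω)
          ≤ (L : ℝ) * ‖A (Zv ω) - W T ω‖ := FF_lip hn hLip (Zv ω) _ _
      rw [norm_sub_rev] at h1
      have h2 := mul_le_mul_of_nonneg_left (hsame ω) hL0
      have h3 : FF ℓ n (Zv ω) (W T ω) = (n : ℝ)⁻¹ * ∑ i, ℓ (W T ω) (Z i ω) := rfl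
      have h4 : EmpA ω = FF ℓ n (Zv ω) (A (Zv ω)) := rfl
      linarith
    have h3 := integral_mono hintEmpA
      (hintEmpW.add (integrable_const ((L : ℝ) * (Real.sqrt T * (η * L))))) hpt
    simp only [Pi.add_apply] at h3
    rwa [integral_add hintEmpW (integrable_const ((L : ℝ) * (Real.sqrt T * (η * L)))),
      integral_const, probReal_univ, one_smul] at h3
  -- step 3 : transfer to ν
  have hFFAmeas : Measurable fun s : Fin n → 𝒵 => FF ℓ n s (A s) := by
    apply Measurable.const_mul
    apply Finset.measurable_sum
    intro i _
    exact hℓmeas.comp (hAmeas.prodMk (measurable_pi_apply i))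
  have hνAL : ∫ ω, Lμf (A (Zv ω)) ∂ℙ = ∫ s, Lμf (A s) ∂ν := by
    rw [← hZvlaw, integral_map hZvmeas.aemeasurable
      ((show Measurable fun s => Lμf (A s) from hLμ_cont.measurable.comp hAmeas).aestronglyMeasurable)]
  have hνAE : ∫ ω, EmpA ω ∂ℙ = ∫ s, FF ℓ n s (A s) ∂ν := by
    rw [← hZvlaw, integral_map hZvmeas.aemeasurable hFFAmeas.aestronglyMeasurable]
  -- step 4 : exchange argument on ρ
  have mp_e := MeasureTheory.measurePreserving_piFinSuccAbove
    (fun _ : Fin (n + 1) => μ) (Fin.last n)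
  set su : (Fin (n + 1) → 𝒵) → (Fin n → 𝒵) := fun u j => u j.castSucc with hsudef
  have hsumeas : Measurable su := measurable_pi_lambda _ fun j => measurable_pi_apply _
  set pairm : (Fin (n + 1) → 𝒵) → (Fin n → 𝒵) × 𝒵 := fun u => (su u, u (Fin.last n))
    with hpairdef
  have mp_pair : MeasurePreserving pairm ρ (ν.prod μ) := by
    have h1 : MeasurePreserving
        (Prod.swap ∘ (MeasurableEquiv.piFinSuccAbove (fun _ : Fin (n+1) => 𝒵) (Fin.last n)))
        ρ (ν.prod μ) := (Measure.measurePreserving_swap (μ := μ) (ν := ν)).comp mp_e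
    have h2 : (Prod.swap ∘ (MeasurableEquiv.piFinSuccAbove (fun _ : Fin (n+1) => 𝒵) (Fin.last n)))
        = pairm := by
      funext u
      show (fun j => u ((Fin.last n).succAbove j), u (Fin.last n)) = (su u, u (Fin.last n))
      simp only [hpairdef, hsudef, Fin.succAbove_last]
    rw [← h2]
    exact h1
  have mp_fst : MeasurePreserving (Prod.fst : (Fin n → 𝒵) × 𝒵 → (Fin n → 𝒵)) (ν.prod μ) ν := by
    refine ⟨measurable_fst, ?_⟩
    rw [Measure.map_fst_prod]
    simp
  have mp_su : MeasurePreserving su ρ ν := by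
    have h1 : su = Prod.fst ∘ pairm := rfl
    rw [h1]
    exact mp_fst.comp mp_pair
  have mp_evali : ∀ i : Fin n,
      MeasurePreserving (fun u : Fin (n + 1) → 𝒵 => u i.castSucc) ρ μ := by
    intro i
    have h1 := MeasureTheory.measurePreserving_piFinSuccAbove
      (fun _ : Fin (n + 1) => μ) i.castSucc
    have h2 : (fun u : Fin (n + 1) → 𝒵 => u i.castSucc)
        = Prod.fst ∘ (MeasurableEquiv.piFinSuccAbove (fun _ : Fin (n+1) => 𝒵) i.castSucc) := rfl
    rw [h2]
    refine MeasurePreserving.comp ?_ h1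
    refine ⟨measurable_fst, ?_⟩
    rw [Measure.map_fst_prod]
    simp
  have mp_perm : ∀ i : Fin n,
      MeasurePreserving (fun u : Fin (n + 1) → 𝒵 => u ∘ (Equiv.swap i.castSucc (Fin.last n)))
        ρ ρ := by
    intro i
    have h1 := MeasureTheory.measurePreserving_piCongrLeft (fun _ : Fin (n + 1) => μ)
      (Equiv.swap i.castSucc (Fin.last n))
    have h2 : ⇑(MeasurableEquiv.piCongrLeft (fun _ : Fin (n+1) => 𝒵)
        (Equiv.swap i.castSucc (Fin.last n)))
        = fun u => u ∘ (Equiv.swap i.castSucc (Fin.last n)) := by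
      funext u
      funext j
      simp [MeasurableEquiv.piCongrLeft, Equiv.piCongrLeft, Equiv.symm_swap]
    rw [← h2]
    exact h1
  -- integrand on ρ
  set Φ : (Fin (n + 1) → 𝒵) → ℝ := fun u => ℓ (A (su u)) (u (Fin.last n)) with hΦdef
  have hΦmeas : Measurable Φ :=
    hℓmeas.comp ((hAmeas.comp hsumeas).prodMk (measurable_pi_apply _))
  have hq_meas : Measurable (fun q : (Fin n → 𝒵) × 𝒵 => ℓ (A q.1) q.2) :=
    hℓmeas.comp ((hAmeas.comp measurable_fst).prodMk measurable_snd)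
  have hq_int : Integrable (fun q : (Fin n → 𝒵) × 𝒵 => ℓ (A q.1) q.2) (ν.prod μ) := by
    have hm : Measurable (fun z => |ℓ w₀ z|) :=
      (hℓmeas.comp (measurable_const.prodMk measurable_id)).abs
    have mp_snd : MeasurePreserving (Prod.snd : (Fin n → 𝒵) × 𝒵 → 𝒵) (ν.prod μ) μ := by
      refine ⟨measurable_snd, ?_⟩
      rw [Measure.map_snd_prod]
      simp
    have hdom2 : Integrable (fun q : (Fin n → 𝒵) × 𝒵 => |ℓ w₀ q.2|) (ν.prod μ) := by
      have h1 := (integrable_map_measure hm.aestronglyMeasurable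
        mp_snd.measurable.aemeasurable).mp (by rw [mp_snd.map_eq]; exact hιw0)
      exact h1
    apply Integrable.mono' (hdom2.add (integrable_const ((L : ℝ) * D)))
      hq_meas.aestronglyMeasurable
    refine Filter.Eventually.of_forall fun q => ?_
    rw [Real.norm_eq_abs]
    exact habs _ (hAmem _) _
  have hΦint : Integrable Φ ρ := by
    have h1 := (integrable_map_measure hq_meas.aestronglyMeasurable
      mp_pair.measurable.aemeasurable).mp (by rw [mp_pair.map_eq]; exact hq_int)
    exact h1
  have step4a : ∫ s, Lμf (A s) ∂ν = ∫ u, Φ u ∂ρ := by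
    have h1 : ∫ q : (Fin n → 𝒵) × 𝒵, ℓ (A q.1) q.2 ∂(ν.prod μ)
        = ∫ s, ∫ z, ℓ (A s) z ∂μ ∂ν := integral_prod _ hq_int
    have h2 : ∫ q : (Fin n → 𝒵) × 𝒵, ℓ (A q.1) q.2 ∂(ν.prod μ) = ∫ u, Φ u ∂ρ := by
      rw [← mp_pair.map_eq, integral_map mp_pair.measurable.aemeasurable
        hq_meas.aestronglyMeasurable]
    rw [← h2, h1.symm]
  set Ψ : Fin n → (Fin (n + 1) → 𝒵) → ℝ := fun i u => ℓ (A (su u)) (su u i) with hΨdef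
  have hΨmeas : ∀ i, Measurable (Ψ i) := fun i =>
    hℓmeas.comp ((hAmeas.comp hsumeas).prodMk ((measurable_pi_apply i).comp hsumeas))
  have hΨint : ∀ i, Integrable (Ψ i) ρ := by
    intro i
    have hm : Measurable (fun z => |ℓ w₀ z|) :=
      (hℓmeas.comp (measurable_const.prodMk measurable_id)).abs
    have hdom3 : Integrable (fun u : Fin (n + 1) → 𝒵 => |ℓ w₀ (u i.castSucc)|) ρ := by
      have h1 := (integrable_map_measure hm.aestronglyMeasurable
        (mp_evali i).measurable.aemeasurable).mp (by rw [(mp_evali i).map_eq]; exact hιw0)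
      exact h1
    apply Integrable.mono' (hdom3.add (integrable_const ((L : ℝ) * D)))
      (hΨmeas i).aestronglyMeasurable
    refine Filter.Eventually.of_forall fun u => ?_
    rw [Real.norm_eq_abs]
    exact habs _ (hAmem _) _
  have hswap_pt : ∀ (i : Fin n) (u : Fin (n + 1) → 𝒵),
      Φ (u ∘ (Equiv.swap i.castSucc (Fin.last n))) ≤ Ψ i u + 2 * η * (L : ℝ) ^ 2 * T / n := by
    intro i u
    set σ := Equiv.swap i.castSucc (Fin.last n) with hσ
    have e1 : (u ∘ σ) (Fin.last n) = su u i := by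
      show u (σ (Fin.last n)) = u i.castSucc
      rw [hσ, Equiv.swap_apply_right]
    have hdd : ∀ j, j ≠ i → su (u ∘ σ) j = su u j := by
      intro j hj
      show u (σ j.castSucc) = u j.castSucc
      congr 1
      apply Equiv.swap_apply_of_ne_of_ne
      · exact fun h => hj (Fin.castSucc_injective n h)
      · exact (Fin.castSucc_lt_last j).ne
    have hst := traj_swap (w₀ := w₀) h𝒲conv hproj_mem hproj_near hη hn hconv hLip hdd T
    have h2 : ℓ (A (su (u ∘ σ))) (su u i) - ℓ (A (su u)) (su u i)
        ≤ (L : ℝ) * ‖A (su (u ∘ σ)) - A (su u)‖ := hℓlipR _ _ _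
    have h3 : (L : ℝ) * ‖A (su (u ∘ σ)) - A (su u)‖
        ≤ (L : ℝ) * (2 * η * (L : ℝ) * T / n) :=
      mul_le_mul_of_nonneg_left hst hL0
    have h4 : Φ (u ∘ σ) = ℓ (A (su (u ∘ σ))) (su u i) := by
      rw [hΦdef]
      simp only
      rw [e1]
    have h5 : (L : ℝ) * (2 * η * (L : ℝ) * T / n) = 2 * η * (L : ℝ) ^ 2 * T / n := by ring
    have h6 : Ψ i u = ℓ (A (su u)) (su u i) := rfl
    linarith [h4 ▸ le_refl (Φ (u ∘ σ))]
  have step4b : ∀ i : Fin n,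
      ∫ u, Φ u ∂ρ ≤ (∫ u, Ψ i u ∂ρ) + 2 * η * (L : ℝ) ^ 2 * T / n := by
    intro i
    have hperm := mp_perm i
    have h1 : ∫ u, Φ u ∂ρ
        = ∫ u, Φ (u ∘ (Equiv.swap i.castSucc (Fin.last n))) ∂ρ := by
      conv_lhs => rw [← hperm.map_eq]
      rw [integral_map hperm.measurable.aemeasurable hΦmeas.aestronglyMeasurable]
    have h2 : Integrable (fun u => Φ (u ∘ (Equiv.swap i.castSucc (Fin.last n)))) ρ := by
      have := (integrable_map_measure hΦmeas.aestronglyMeasurable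
        hperm.measurable.aemeasurable).mp (by rw [hperm.map_eq]; exact hΦint)
      exact this
    have h3 := integral_mono h2
      ((hΨint i).add (integrable_const (2 * η * (L : ℝ) ^ 2 * T / n)))
      (fun u => hswap_pt i u)
    simp only [Pi.add_apply] at h3
    rw [integral_add (hΨint i) (integrable_const (2 * η * (L : ℝ) ^ 2 * T / n)),
      integral_const, probReal_univ, one_smul] at h3
    linarith [h1, h3]
  have hℓAsi_meas : ∀ i : Fin n, Measurable (fun s : Fin n → 𝒵 => ℓ (A s) (s i)) := fun i =>
    hℓmeas.comp (hAmeas.prodMk (measurable_pi_apply i))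
  have step4c : ∀ i : Fin n, ∫ u, Ψ i u ∂ρ = ∫ s, ℓ (A s) (s i) ∂ν := by
    intro i
    rw [← mp_su.map_eq, integral_map mp_su.measurable.aemeasurable
      (hℓAsi_meas i).aestronglyMeasurable]
  have hℓAsi_int : ∀ i : Fin n, Integrable (fun s : Fin n → 𝒵 => ℓ (A s) (s i)) ν := by
    intro i
    have h1 := (integrable_map_measure (hℓAsi_meas i).aestronglyMeasurable
      mp_su.measurable.aemeasurable).mpr (by exact hΨint i)
    rwa [mp_su.map_eq] at h1
  have step4d : ∫ s, FF ℓ n s (A s) ∂ν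
      = (n : ℝ)⁻¹ * ∑ i : Fin n, ∫ s, ℓ (A s) (s i) ∂ν := by
    have h1 : (fun s : Fin n → 𝒵 => FF ℓ n s (A s))
        = fun s => (n : ℝ)⁻¹ * ∑ i, ℓ (A s) (s i) := rfl
    rw [h1, integral_const_mul, integral_finset_sum _ (fun i _ => hℓAsi_int i)]
  have step4 : ∫ s, Lμf (A s) ∂ν
      ≤ (∫ s, FF ℓ n s (A s) ∂ν) + 2 * η * (L : ℝ) ^ 2 * T / n := by
    have h1 : ∫ s, Lμf (A s) ∂ν
        = (n : ℝ)⁻¹ * ∑ _i : Fin n, ∫ u, Φ u ∂ρ := by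
      rw [Finset.sum_const, Finset.card_univ, Fintype.card_fin, nsmul_eq_mul, step4a]
      field_simp
    have h2 : ((n : ℝ)⁻¹ * ∑ _i : Fin n, ∫ u, Φ u ∂ρ)
        ≤ (n : ℝ)⁻¹ * ∑ i : Fin n, ((∫ s, ℓ (A s) (s i) ∂ν) + 2 * η * (L : ℝ) ^ 2 * T / n) := by
      apply mul_le_mul_of_nonneg_left _ (by positivity : (0:ℝ) ≤ (n : ℝ)⁻¹)
      apply Finset.sum_le_sum
      intro i _
      rw [← step4c i]
      exact step4b i
    have h3 : ((n : ℝ)⁻¹ * ∑ i : Fin n, ((∫ s, ℓ (A s) (s i) ∂ν) + 2 * η * (L : ℝ) ^ 2 * T / n))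
        = (∫ s, FF ℓ n s (A s) ∂ν) + 2 * η * (L : ℝ) ^ 2 * T / n := by
      rw [Finset.sum_add_distrib, Finset.sum_const, Finset.card_univ, Fintype.card_fin,
        nsmul_eq_mul, mul_add, step4d]
      congr 1
      field_simp
    linarith
  -- final assembly
  have hgoal1 : ∫ ω, ∫ z, ℓ (W T ω) z ∂μ ∂ℙ = ∫ ω, Lμf (W T ω) ∂ℙ := rfl
  have key : ∫ ω, Lμf (W T ω) ∂ℙ
      ≤ (∫ ω, (n : ℝ)⁻¹ * ∑ i, ℓ (W T ω) (Z i ω) ∂ℙ)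
        + 2 * ((L : ℝ) * (Real.sqrt T * (η * L))) + 2 * η * (L : ℝ) ^ 2 * T / n := by
    have c1 := step1
    have c2 := hνAL
    have c3 := step4
    have c4 := hνAE
    have c5 := step2
    linarith
  rw [hgoal1]
  have hfin1 : 2 * ((L : ℝ) * (Real.sqrt T * (η * L))) ≤ 8 * (L : ℝ) ^ 2 * Real.sqrt T * η := by
    nlinarith [mul_nonneg (mul_nonneg hL0 hsqT) (mul_nonneg (le_of_lt hη) hL0)]
  have hfin2 : 2 * η * (L : ℝ) ^ 2 * T / n ≤ 8 * (L : ℝ) ^ 2 * T * η / n := by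
    apply (div_le_div_iff_of_pos_right hn').mpr
    nlinarith [mul_nonneg (mul_nonneg (le_of_lt hη) (mul_nonneg hL0 hL0)) hT0]
  linarith
end

section
/- Assume that for every z ∈ Z the map w ↦ ℓ(w, z) is nonnegative, differentiable on ℝ^d and β-smooth (i.e. ‖∇ℓ(w, z) − ∇ℓ(w', z)‖ ≤ β‖w − w'‖ for all w, w'). Let W = A(S, V) ∈ ℝ^d be the square-integrable output of a (possibly randomized) learning algorithm with internal randomness V independent of S. Let S' = (Z'_1, …, Z'_n) be an independent i.i.d. copy of S and, for each i, let S^{(i)} denote S with its i-th sample replaced by Z'_i. Define the ℓ₂ on-average model stability ε_stab := E[(1/n) Σ_{i=1}^n ‖A(S, V) − A(S^{(i)}, V)‖²]. Then gen ≤ inf_{γ > β} (1/(1 − β/γ)) · ( (2β/γ) · E[L_S(W)] + ((β + γ)/2) · ε_stab ). -/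
open MeasureTheory ProbabilityTheory
open scoped ENNReal

section analysisAux
variable {F : Type*} [NormedAddCommGroup F] [InnerProductSpace ℝ F] [CompleteSpace F]

private lemma descent_weak {f : F → ℝ} {β : ℝ} (hβ : 0 ≤ β) (hd : Differentiable ℝ f)
    (hL : ∀ u v : F, ‖gradient f u - gradient f v‖ ≤ β * ‖u - v‖) (x y : F) :
    f y ≤ f x + inner ℝ (gradient f x) (y - x) + β * ‖y - x‖ ^ 2 := by
  set c := gradient f x with hc
  set g : F → ℝ := fun w => f w - inner ℝ c w with hg
  have hinnerSL : (innerSL ℝ c : F →L[ℝ] ℝ) = InnerProductSpace.toDual ℝ F c := by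
    ext w; simp [InnerProductSpace.toDual_apply_apply]
  have hgd : ∀ w : F, HasFDerivAt g
      (InnerProductSpace.toDual ℝ F (gradient f w) - InnerProductSpace.toDual ℝ F c) w := by
    intro w
    have h1 : HasFDerivAt f (InnerProductSpace.toDual ℝ F (gradient f w)) w :=
      hasGradientAt_iff_hasFDerivAt.mp (hd w).hasGradientAt
    have h2 : HasFDerivAt (fun w : F => (inner ℝ c w : ℝ)) (innerSL ℝ c) w :=
      (innerSL ℝ c).hasFDerivAt
    have h3 := h1.sub h2
    rw [hinnerSL] at h3
    exact h3
  have hbound : ∀ w ∈ Metric.closedBall x ‖y - x‖,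
      ‖InnerProductSpace.toDual ℝ F (gradient f w) - InnerProductSpace.toDual ℝ F c‖
        ≤ β * ‖y - x‖ := by
    intro w hw
    rw [← map_sub, (InnerProductSpace.toDual ℝ F).norm_map]
    calc ‖gradient f w - c‖ ≤ β * ‖w - x‖ := hL w x
      _ ≤ β * ‖y - x‖ := by
          have := Metric.mem_closedBall.mp hw
          rw [dist_eq_norm] at this
          nlinarith
  have hmvt := (convex_closedBall x ‖y - x‖).norm_image_sub_le_of_norm_hasFDerivWithin_le
    (fun w hw => (hgd w).hasFDerivWithinAt) hbound
    (Metric.mem_closedBall_self (norm_nonneg _))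
    (by rw [Metric.mem_closedBall, dist_eq_norm])
  have h3 : g y - g x ≤ β * ‖y - x‖ * ‖y - x‖ := by
    calc g y - g x ≤ ‖g y - g x‖ := le_abs_self _
      _ ≤ β * ‖y - x‖ * ‖y - x‖ := hmvt
  have h4 : (inner ℝ c y : ℝ) - inner ℝ c x = inner ℝ c (y - x) := (inner_sub_right c y x).symm
  simp only [hg] at h3
  nlinarith [h3]

private lemma grad_sq_le_s12 {f : F → ℝ} {β : ℝ} (hβ : 0 < β) (h0 : ∀ w, 0 ≤ f w)
    (hd : Differentiable ℝ f)
    (hL : ∀ u v : F, ‖gradient f u - gradient f v‖ ≤ β * ‖u - v‖) (x : F) :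
    ‖gradient f x‖ ^ 2 ≤ 4 * β * f x := by
  have h := descent_weak hβ.le hd hL x (x - (1 / (2 * β)) • gradient f x)
  have h1 : (x - (1 / (2 * β)) • gradient f x) - x = -((1 / (2 * β)) • gradient f x) := by abel
  rw [h1] at h
  have h2 : (inner ℝ (gradient f x) (-((1 / (2 * β)) • gradient f x)) : ℝ)
      = -((1 / (2 * β)) * ‖gradient f x‖ ^ 2) := by
    rw [inner_neg_right, real_inner_smul_right, real_inner_self_eq_norm_sq]
  have h3 : ‖-((1 / (2 * β)) • gradient f x)‖ = (1 / (2 * β)) * ‖gradient f x‖ := by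
    rw [norm_neg, norm_smul, Real.norm_eq_abs,
      abs_of_pos (show (0:ℝ) < 1 / (2 * β) by positivity)]
  rw [h2, h3] at h
  have h5 := h0 (x - (1 / (2 * β)) • gradient f x)
  have hb : (0:ℝ) < 2 * β := by linarith
  have key : f x - (1 / (4 * β)) * ‖gradient f x‖ ^ 2 ≥ 0 := by
    have e : β * ((1 / (2 * β)) * ‖gradient f x‖) ^ 2 = (1 / (4 * β)) * ‖gradient f x‖ ^ 2 := by
      field_simp; ring
    have e2 : 1 / (2 * β) * ‖gradient f x‖ ^ 2 = 2 * ((1 / (4 * β)) * ‖gradient f x‖ ^ 2) := by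
      field_simp; ring
    linarith [h, h5]
  have e3 : 4 * β * ((1 / (4 * β)) * ‖gradient f x‖ ^ 2) = ‖gradient f x‖ ^ 2 := by
    field_simp
  nlinarith [key, mul_le_mul_of_nonneg_left key (by linarith : (0:ℝ) ≤ 4 * β)]

private lemma key_pointwise {f : F → ℝ} {β γ : ℝ} (hβ : 0 < β) (hγ : β < γ) (h0 : ∀ w, 0 ≤ f w)
    (hd : Differentiable ℝ f)
    (hL : ∀ u v : F, ‖gradient f u - gradient f v‖ ≤ β * ‖u - v‖) (w w' : F) :
    f w' ≤ (1 + 2 * β / (γ - β)) * f w + ((β + γ) / 2) * ‖w - w'‖ ^ 2 := by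
  have hgb : (0:ℝ) < γ - β := by linarith
  set c' : ℝ := (γ - β) / 2 with hc'
  have hc'0 : 0 < c' := by positivity
  have hdesc := descent_weak hβ.le hd hL w w'
  have hip : (inner ℝ (gradient f w) (w' - w) : ℝ) ≤ ‖gradient f w‖ * ‖w' - w‖ :=
    real_inner_le_norm _ _
  have hgsq := grad_sq_le_s12 hβ h0 hd hL w
  set a := ‖gradient f w‖ with ha
  set b := ‖w' - w‖ with hb
  have hab : a * b ≤ (β / c') * f w + c' * b ^ 2 := by
    have h1 : a ^ 2 ≤ 4 * β * f w := hgsq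
    have h2 : 0 ≤ (a - 2 * c' * b) ^ 2 := sq_nonneg _
    have h3 : c' * (a * b) ≤ c' * ((β / c') * f w + c' * b ^ 2) := by
      have e : c' * ((β / c') * f w + c' * b ^ 2) = β * f w + c' * c' * b ^ 2 := by
        field_simp
      rw [e]; nlinarith
    exact le_of_mul_le_mul_left h3 hc'0
  have hrev : ‖w - w'‖ = b := by rw [hb, norm_sub_rev]
  rw [hrev]
  have hcoef : β / c' = 2 * β / (γ - β) := by rw [hc']; field_simp
  have hcoef2 : c' + β = (β + γ) / 2 := by rw [hc']; ring
  rw [← hcoef, ← hcoef2]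
  nlinarith [hdesc, hip, hab]

end analysisAux

private lemma map_eval_pi {ι X : Type*} [Fintype ι] [DecidableEq ι] [MeasurableSpace X]
    (μ : Measure X) [IsProbabilityMeasure μ] (i : ι) :
    (Measure.pi fun _ : ι => μ).map (fun f => f i) = μ := by
  ext s hs
  rw [Measure.map_apply (measurable_pi_apply i) hs]
  have h1 : (fun f : ι → X => f i) ⁻¹' s
      = Set.pi Set.univ (Function.update (fun _ => Set.univ) i s) := by
    ext f
    simp only [Set.mem_preimage, Set.mem_pi, Set.mem_univ, forall_true_left]
    constructor
    · intro h j
      rcases eq_or_ne j i with rfl | hj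
      · simpa using h
      · simp [Function.update_of_ne hj]
    · intro h
      simpa using h i
  rw [h1, Measure.pi_pi]
  rw [Finset.prod_eq_single i (fun j _ hj => by simp [Function.update_of_ne hj])
    (by simp)]
  simp

private lemma measurePreserving_comp_perm {ι X : Type*} [Fintype ι] [MeasurableSpace X]
    (μ : Measure X) [IsProbabilityMeasure μ] (e : ι ≃ ι) :
    MeasurePreserving (fun f : ι → X => f ∘ e)
      (Measure.pi fun _ : ι => μ) (Measure.pi fun _ : ι => μ) := by
  have hmeas : Measurable (fun f : ι → X => f ∘ e) :=
    measurable_pi_lambda _ fun j => measurable_pi_apply (e j)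
  refine ⟨hmeas, ?_⟩
  refine (Measure.pi_eq fun s hs => ?_).symm
  rw [Measure.map_apply hmeas (MeasurableSet.univ_pi hs)]
  have h1 : (fun f : ι → X => f ∘ e) ⁻¹' Set.pi Set.univ s
      = Set.pi Set.univ (fun k => s (e.symm k)) := by
    ext f
    simp only [Set.mem_preimage, Set.mem_pi, Set.mem_univ, forall_true_left, Function.comp]
    constructor
    · intro h k
      simpa using h (e.symm k)
    · intro h j
      simpa using h (e j)
  rw [h1, Measure.pi_pi]
  exact Equiv.prod_comp e.symm fun j => μ (s j)

set_option maxHeartbeats 2000000 in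
/-- Generalization via ℓ₂ on-average model stability for nonnegative, differentiable,
`β`-smooth losses:
`gen ≤ inf_{γ > β} (1/(1 − β/γ))·((2β/γ)·E[L_S(W)] + ((β + γ)/2)·ε_stab)`,
where `ε_stab := E[(1/n)Σ_i ‖A(S, V) − A(S^{(i)}, V)‖²]` and `S^{(i)}` is `S` with its
`i`-th sample replaced by `Z'_i`. -/
theorem gen_le_on_average_model_stability
    {d n : ℕ} (hn : 0 < n) {Ω 𝒵 𝒱 : Type*}
    [MeasureSpace Ω] [IsProbabilityMeasure (ℙ : Measure Ω)]
    [MeasurableSpace 𝒵] [StandardBorelSpace 𝒵] [MeasurableSpace 𝒱]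
    (μ : Measure 𝒵) [IsProbabilityMeasure μ]
    (Z Z' : Fin n → Ω → 𝒵)
    (hZmeas : ∀ i, Measurable (Z i)) (hZ'meas : ∀ i, Measurable (Z' i))
    (hiid : iIndepFun
      (Sum.elim Z Z' : Fin n ⊕ Fin n → Ω → 𝒵) ℙ)
    (hlaw : ∀ i, Measure.map (Z i) ℙ = μ) (hlaw' : ∀ i, Measure.map (Z' i) ℙ = μ)
    (V : Ω → 𝒱) (hVmeas : Measurable V)
    (hVindep : IndepFun (fun ω => (fun i => Z i ω, fun i => Z' i ω)) V ℙ)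
    (ℓ : EuclideanSpace ℝ (Fin d) → 𝒵 → ℝ) (β : ℝ) (hβ : 0 < β)
    (hℓmeas : Measurable (fun p : EuclideanSpace ℝ (Fin d) × 𝒵 => ℓ p.1 p.2))
    (hnonneg : ∀ z w, 0 ≤ ℓ w z)
    (hdiff : ∀ z, Differentiable ℝ (fun w => ℓ w z))
    (hsmooth : ∀ z, ∀ w w' : EuclideanSpace ℝ (Fin d),
      ‖gradient (fun w => ℓ w z) w - gradient (fun w => ℓ w z) w'‖ ≤ β * ‖w - w'‖)
    (A : (Fin n → 𝒵) → 𝒱 → EuclideanSpace ℝ (Fin d))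
    (hA : Measurable (fun p : (Fin n → 𝒵) × 𝒱 => A p.1 p.2))
    (W : Ω → EuclideanSpace ℝ (Fin d))
    (hW : W = fun ω => A (fun i => Z i ω) (V ω))
    (hW2 : MemLp W 2 ℙ)
    (hint_emp : ∀ i, Integrable (fun ω => ℓ (W ω) (Z i ω)) ℙ)
    (hint_pop : Integrable (fun ω => ∫ z, ℓ (W ω) z ∂μ) ℙ)
    (hint_loss : ∀ w, Integrable (fun z => ℓ w z) μ)
    (hint_stab : ∀ i, Integrable (fun ω =>
      ‖A (fun j => Z j ω) (V ω)
        - A (Function.update (fun j => Z j ω) i (Z' i ω)) (V ω)‖ ^ 2) ℙ) :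
    (∫ ω, ∫ z, ℓ (W ω) z ∂μ ∂ℙ) - (∫ ω, (n : ℝ)⁻¹ * ∑ i, ℓ (W ω) (Z i ω) ∂ℙ)
      ≤ ⨅ γ : {γ : ℝ // β < γ},
          (1 / (1 - β / γ.1)) *
            ((2 * β / γ.1) * (∫ ω, (n : ℝ)⁻¹ * ∑ i, ℓ (W ω) (Z i ω) ∂ℙ)
              + ((β + γ.1) / 2) *
                  ∫ ω, (n : ℝ)⁻¹ * ∑ i : Fin n,
                    ‖A (fun j => Z j ω) (V ω)
                      - A (Function.update (fun j => Z j ω) i (Z' i ω)) (V ω)‖ ^ 2 ∂ℙ) := by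
  classical
  subst hW
  have hn' : (n : ℝ) ≠ 0 := Nat.cast_ne_zero.mpr hn.ne'
  set W : Ω → EuclideanSpace ℝ (Fin d) := fun ω => A (fun i => Z i ω) (V ω) with hWdef
  -- notation
  set φ : EuclideanSpace ℝ (Fin d) → 𝒵 → ℝ≥0∞ := fun w z => ENNReal.ofReal (ℓ w z) with hφdef
  have hφmeas : Measurable fun p : EuclideanSpace ℝ (Fin d) × 𝒵 => φ p.1 p.2 :=
    ENNReal.measurable_ofReal.comp hℓmeas
  set Wi : Fin n → Ω → EuclideanSpace ℝ (Fin d) :=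
    fun i ω => A (Function.update (fun j => Z j ω) i (Z' i ω)) (V ω) with hWidef
  have hWmeas : Measurable W :=
    hA.comp ((measurable_pi_lambda _ fun j => hZmeas j).prodMk hVmeas)
  have hWimeas : ∀ i, Measurable (Wi i) := by
    intro i
    refine hA.comp ((measurable_pi_lambda _ fun j => ?_).prodMk hVmeas)
    show Measurable fun ω : Ω => Function.update (fun k => Z k ω) i (Z' i ω) j
    have hupd : (fun ω : Ω => Function.update (fun k => Z k ω) i (Z' i ω) j)
        = fun ω : Ω => if j = i then Z' i ω else Z j ω := by
      funext ω
      exact Function.update_apply _ i _ j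
    rw [hupd]
    by_cases h : j = i
    · simp only [if_pos h]
      exact hZ'meas i
    · simp only [if_neg h]
      exact hZmeas j
  set SS' : Ω → ((Fin n ⊕ Fin n) → 𝒵) := fun ω j => Sum.elim Z Z' j ω with hSS'def
  have hSS'meas : Measurable SS' := measurable_pi_lambda _ fun j => by
    cases j with
    | inl i => exact hZmeas i
    | inr i => exact hZ'meas i
  set π1 : Measure (Fin n → 𝒵) := Measure.pi (fun _ => μ) with hπ1def
  set π2 : Measure ((Fin n ⊕ Fin n) → 𝒵) := Measure.pi (fun _ => μ) with hπ2def
  set ν : Measure 𝒱 := Measure.map V ℙ with hνdef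
  haveI : IsProbabilityMeasure ν := Measure.isProbabilityMeasure_map hVmeas.aemeasurable
  set ρ : Measure (((Fin n ⊕ Fin n) → 𝒵) × 𝒱) := π2.prod ν with hρdef
  set τ : Measure (((Fin n → 𝒵) × (Fin n → 𝒵)) × 𝒱) := (π1.prod π1).prod ν with hτdef
  -- Step 1 : the law of SS'
  have hlaw2 : Measure.map SS' ℙ = π2 := by
    refine (Measure.pi_eq fun s hs => ?_).symm
    rw [Measure.map_apply hSS'meas (MeasurableSet.univ_pi hs)]
    have h1 : SS' ⁻¹' Set.pi Set.univ s = ⋂ j, Sum.elim Z Z' j ⁻¹' s j := by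
      ext ω
      simp [hSS'def, Set.mem_pi]
    rw [h1, hiid.meas_iInter (fun j => ⟨s j, hs j, rfl⟩)]
    refine Finset.prod_congr rfl fun j _ => ?_
    cases j with
    | inl i =>
        rw [show Sum.elim Z Z' (Sum.inl i) = Z i from rfl, ← hlaw i,
          Measure.map_apply (hZmeas i) (hs _)]
    | inr i =>
        rw [show Sum.elim Z Z' (Sum.inr i) = Z' i from rfl, ← hlaw' i,
          Measure.map_apply (hZ'meas i) (hs _)]
  -- Step 2 : joint law of (SS', V)
  have hindep : IndepFun SS' V ℙ := by
    have h := hVindep.comp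
      (MeasurableEquiv.sumPiEquivProdPi (fun _ : Fin n ⊕ Fin n => 𝒵)).symm.measurable
      (measurable_id (α := 𝒱))
    have heq : ((MeasurableEquiv.sumPiEquivProdPi (fun _ : Fin n ⊕ Fin n => 𝒵)).symm
        ∘ (fun ω => (fun i => Z i ω, fun i => Z' i ω))) = SS' := by
      funext ω
      funext j
      cases j <;> rfl
    rwa [heq, Function.id_comp] at h
  have hjoint : Measure.map (fun ω => (SS' ω, V ω)) ℙ = ρ := by
    rw [(indepFun_iff_map_prod_eq_prod_map_map hSS'meas.aemeasurable
      hVmeas.aemeasurable).mp hindep, hlaw2]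
  have hmaster : ∀ g : ((Fin n ⊕ Fin n) → 𝒵) × 𝒱 → ℝ≥0∞, Measurable g →
      ∫⁻ ω, g (SS' ω, V ω) ∂ℙ = ∫⁻ p, g p ∂ρ := by
    intro g hg
    rw [← hjoint, lintegral_map hg (hSS'meas.prodMk hVmeas)]
  -- splitting measure-preserving map
  have hsplitMP : MeasurePreserving
      (fun p : ((Fin n ⊕ Fin n) → 𝒵) × 𝒱 => ((p.1 ∘ Sum.inl, p.1 ∘ Sum.inr), p.2)) ρ τ := by
    have h2 := measurePreserving_sumPiEquivProdPi_symm
      (fun _ : Fin n ⊕ Fin n => (μ : Measure 𝒵))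
    have h3 := h2.symm (MeasurableEquiv.sumPiEquivProdPi (fun _ : Fin n ⊕ Fin n => 𝒵)).symm
    rw [MeasurableEquiv.symm_symm] at h3
    have h4 := h3.prod (MeasurePreserving.id ν)
    exact h4
  -- swap measure-preserving maps
  have hswapMP : ∀ i : Fin n, MeasurePreserving
      (fun p : ((Fin n ⊕ Fin n) → 𝒵) × 𝒱 =>
        (p.1 ∘ (Equiv.swap (Sum.inl i) (Sum.inr i)), p.2)) ρ ρ := by
    intro i
    exact (measurePreserving_comp_perm μ (Equiv.swap (Sum.inl i) (Sum.inr i))).prod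
      (MeasurePreserving.id ν)
  -- measurability helpers
  have m_inl : Measurable fun p : ((Fin n ⊕ Fin n) → 𝒵) × 𝒱 => p.1 ∘ Sum.inl :=
    measurable_pi_lambda _ fun j => (measurable_pi_apply (Sum.inl j)).comp measurable_fst
  have m_AW : Measurable fun p : ((Fin n ⊕ Fin n) → 𝒵) × 𝒱 => A (p.1 ∘ Sum.inl) p.2 :=
    hA.comp (m_inl.prodMk measurable_snd)
  have m_Aq : Measurable fun q : ((Fin n → 𝒵) × (Fin n → 𝒵)) × 𝒱 => A q.1.1 q.2 :=
    hA.comp ((measurable_fst.fst).prodMk measurable_snd)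
  have mG2 : Measurable fun q : ((Fin n → 𝒵) × (Fin n → 𝒵)) × 𝒱 =>
      ∫⁻ z, φ (A q.1.1 q.2) z ∂μ := by
    apply Measurable.lintegral_prod_right
      (f := fun (q : ((Fin n → 𝒵) × (Fin n → 𝒵)) × 𝒱) (z : 𝒵) => φ (A q.1.1 q.2) z)
    exact hφmeas.comp ((m_Aq.comp measurable_fst).prodMk measurable_snd)
  -- Tonelli step
  have htonelli : ∀ i : Fin n,
      (∫⁻ q, φ (A q.1.1 q.2) (q.1.2 i) ∂τ) = ∫⁻ q, ∫⁻ z, φ (A q.1.1 q.2) z ∂μ ∂τ := by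
    intro i
    have mG1 : Measurable fun q : ((Fin n → 𝒵) × (Fin n → 𝒵)) × 𝒱 =>
        φ (A q.1.1 q.2) (q.1.2 i) :=
      hφmeas.comp (m_Aq.prodMk ((measurable_pi_apply i).comp measurable_fst.snd))
    have mInner : Measurable fun ab : (Fin n → 𝒵) × (Fin n → 𝒵) =>
        ∫⁻ v, φ (A ab.1 v) (ab.2 i) ∂ν := by
      apply Measurable.lintegral_prod_right
        (f := fun (ab : (Fin n → 𝒵) × (Fin n → 𝒵)) (v : 𝒱) => φ (A ab.1 v) (ab.2 i))
      exact hφmeas.comp ((hA.comp ((measurable_fst.fst).prodMk measurable_snd)).prodMk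
        ((measurable_pi_apply i).comp measurable_fst.snd))
    have mInner2 : Measurable fun ab : (Fin n → 𝒵) × (Fin n → 𝒵) =>
        ∫⁻ v, ∫⁻ z, φ (A ab.1 v) z ∂μ ∂ν := by
      apply Measurable.lintegral_prod_right
        (f := fun (ab : (Fin n → 𝒵) × (Fin n → 𝒵)) (v : 𝒱) => ∫⁻ z, φ (A ab.1 v) z ∂μ)
      exact mG2
    have step1 : (∫⁻ q, φ (A q.1.1 q.2) (q.1.2 i) ∂τ)
        = ∫⁻ ab, ∫⁻ v, φ (A ab.1 v) (ab.2 i) ∂ν ∂(π1.prod π1) :=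
      lintegral_prod _ mG1.aemeasurable
    have step2 : (∫⁻ ab, ∫⁻ v, φ (A ab.1 v) (ab.2 i) ∂ν ∂(π1.prod π1))
        = ∫⁻ a, ∫⁻ b, ∫⁻ v, φ (A a v) (b i) ∂ν ∂π1 ∂π1 :=
      lintegral_prod _ mInner.aemeasurable
    have rhs1 : (∫⁻ q, ∫⁻ z, φ (A q.1.1 q.2) z ∂μ ∂τ)
        = ∫⁻ ab, ∫⁻ v, ∫⁻ z, φ (A ab.1 v) z ∂μ ∂ν ∂(π1.prod π1) :=
      lintegral_prod _ mG2.aemeasurable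
    have rhs2 : (∫⁻ ab, ∫⁻ v, ∫⁻ z, φ (A ab.1 v) z ∂μ ∂ν ∂(π1.prod π1))
        = ∫⁻ a, ∫⁻ b, ∫⁻ v, ∫⁻ z, φ (A a v) z ∂μ ∂ν ∂π1 ∂π1 :=
      lintegral_prod _ mInner2.aemeasurable
    rw [step1, step2, rhs1, rhs2]
    refine lintegral_congr fun a => ?_
    have hswap : (∫⁻ b, ∫⁻ v, φ (A a v) (b i) ∂ν ∂π1)
        = ∫⁻ v, ∫⁻ b, φ (A a v) (b i) ∂π1 ∂ν :=
      lintegral_lintegral_swap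
        (hφmeas.comp ((hA.comp (measurable_const.prodMk measurable_snd)).prodMk
          ((measurable_pi_apply i).comp measurable_fst))).aemeasurable
    have hconstb : (∫⁻ b, ∫⁻ v, ∫⁻ z, φ (A a v) z ∂μ ∂ν ∂π1)
        = ∫⁻ v, ∫⁻ z, φ (A a v) z ∂μ ∂ν := by
      rw [lintegral_const, measure_univ, mul_one]
    rw [hswap, hconstb]
    refine lintegral_congr fun v => ?_
    have heval : (∫⁻ b, φ (A a v) (b i) ∂π1) = ∫⁻ z, φ (A a v) z ∂μ := by
      conv_rhs => rw [← map_eval_pi μ i]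
      exact (lintegral_map (f := fun z => φ (A a v) z)
        (g := fun b : Fin n → 𝒵 => b i)
        (hφmeas.comp (measurable_const.prodMk measurable_id))
        (measurable_pi_apply i)).symm
    rw [heval]
  -- the key exchange identity
  have hkey : ∀ i : Fin n,
      (∫⁻ ω, ∫⁻ z, φ (W ω) z ∂μ ∂ℙ) = ∫⁻ ω, φ (Wi i ω) (Z i ω) ∂ℙ := by
    intro i
    have hg2meas : Measurable fun p : ((Fin n ⊕ Fin n) → 𝒵) × 𝒱 =>
        ∫⁻ z, φ (A (p.1 ∘ Sum.inl) p.2) z ∂μ := by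
      apply Measurable.lintegral_prod_right
        (f := fun (p : ((Fin n ⊕ Fin n) → 𝒵) × 𝒱) (z : 𝒵) => φ (A (p.1 ∘ Sum.inl) p.2) z)
      exact hφmeas.comp ((m_AW.comp measurable_fst).prodMk measurable_snd)
    have mG1 : Measurable fun q : ((Fin n → 𝒵) × (Fin n → 𝒵)) × 𝒱 =>
        φ (A q.1.1 q.2) (q.1.2 i) :=
      hφmeas.comp (m_Aq.prodMk ((measurable_pi_apply i).comp measurable_fst.snd))
    have hgmeas : Measurable fun p : ((Fin n ⊕ Fin n) → 𝒵) × 𝒱 =>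
        φ (A (p.1 ∘ Sum.inl) p.2) (p.1 (Sum.inr i)) :=
      hφmeas.comp (m_AW.prodMk ((measurable_pi_apply (Sum.inr i)).comp measurable_fst))
    have hupd : ∀ ω, ((SS' ω ∘ (Equiv.swap (Sum.inl i) (Sum.inr i))) ∘ Sum.inl)
        = Function.update (fun j => Z j ω) i (Z' i ω) := by
      intro ω
      funext j
      show SS' ω (Equiv.swap (Sum.inl i) (Sum.inr i) (Sum.inl j))
        = Function.update (fun j => Z j ω) i (Z' i ω) j
      rcases eq_or_ne j i with rfl | hj
      · rw [Equiv.swap_apply_left, Function.update_self]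
        rfl
      · rw [Equiv.swap_apply_of_ne_of_ne (fun h => hj (Sum.inl.inj h)) (by simp),
          Function.update_of_ne hj]
        rfl
    calc (∫⁻ ω, ∫⁻ z, φ (W ω) z ∂μ ∂ℙ)
        = ∫⁻ p, (∫⁻ z, φ (A (p.1 ∘ Sum.inl) p.2) z ∂μ) ∂ρ := hmaster _ hg2meas
      _ = ∫⁻ q, (∫⁻ z, φ (A q.1.1 q.2) z ∂μ) ∂τ := hsplitMP.lintegral_comp mG2
      _ = ∫⁻ q, φ (A q.1.1 q.2) (q.1.2 i) ∂τ := (htonelli i).symm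
      _ = ∫⁻ p, φ (A (p.1 ∘ Sum.inl) p.2) (p.1 (Sum.inr i)) ∂ρ :=
          (hsplitMP.lintegral_comp mG1).symm
      _ = ∫⁻ p, φ (A ((p.1 ∘ (Equiv.swap (Sum.inl i) (Sum.inr i))) ∘ Sum.inl) p.2)
            ((p.1 ∘ (Equiv.swap (Sum.inl i) (Sum.inr i))) (Sum.inr i)) ∂ρ :=
          ((hswapMP i).lintegral_comp hgmeas).symm
      _ = ∫⁻ ω, φ (A ((SS' ω ∘ (Equiv.swap (Sum.inl i) (Sum.inr i))) ∘ Sum.inl) (V ω))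
            ((SS' ω ∘ (Equiv.swap (Sum.inl i) (Sum.inr i))) (Sum.inr i)) ∂ℙ :=
          (hmaster (fun p => φ (A ((p.1 ∘ (Equiv.swap (Sum.inl i) (Sum.inr i))) ∘ Sum.inl) p.2)
            ((p.1 ∘ (Equiv.swap (Sum.inl i) (Sum.inr i))) (Sum.inr i)))
            (hgmeas.comp (hswapMP i).measurable)).symm
      _ = ∫⁻ ω, φ (Wi i ω) (Z i ω) ∂ℙ := by
          refine lintegral_congr fun ω => ?_
          rw [hupd ω]
          have h2 : (SS' ω ∘ (Equiv.swap (Sum.inl i) (Sum.inr i))) (Sum.inr i) = Z i ω := by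
            show SS' ω (Equiv.swap (Sum.inl i) (Sum.inr i) (Sum.inr i)) = Z i ω
            rw [Equiv.swap_apply_right]
            rfl
          rw [h2]
  -- conversion of the real integrals to lintegrals
  set Lemp : Fin n → ℝ≥0∞ := fun i => ∫⁻ ω, φ (W ω) (Z i ω) ∂ℙ with hLempdef
  set Lstab : Fin n → ℝ≥0∞ :=
    fun i => ∫⁻ ω, ENNReal.ofReal (‖W ω - Wi i ω‖ ^ 2) ∂ℙ with hLstabdef
  have hLempfin : ∀ i, Lemp i ≠ ⊤ := fun i =>
    ((hasFiniteIntegral_iff_ofReal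
      (ae_of_all _ fun ω => hnonneg (Z i ω) (W ω))).mp (hint_emp i).2).ne
  have hLstabfin : ∀ i, Lstab i ≠ ⊤ := fun i =>
    ((hasFiniteIntegral_iff_ofReal
      (ae_of_all _ fun ω => by positivity)).mp (hint_stab i).2).ne
  have hPopEq : (∫ ω, ∫ z, ℓ (W ω) z ∂μ ∂ℙ)
      = (∫⁻ ω, ∫⁻ z, φ (W ω) z ∂μ ∂ℙ).toReal := by
    rw [integral_eq_lintegral_of_nonneg_ae
      (ae_of_all _ fun ω => integral_nonneg fun z => hnonneg z _) hint_pop.1]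
    congr 1
    refine lintegral_congr fun ω => ?_
    exact ofReal_integral_eq_lintegral_ofReal (hint_loss (W ω))
      (ae_of_all _ fun z => hnonneg z _)
  have hEmpAvg : (∫ ω, (n : ℝ)⁻¹ * ∑ i, ℓ (W ω) (Z i ω) ∂ℙ)
      = (n : ℝ)⁻¹ * ∑ i, (Lemp i).toReal := by
    rw [integral_const_mul, integral_finset_sum _ fun i _ => hint_emp i]
    congr 1
    refine Finset.sum_congr rfl fun i _ => ?_
    rw [integral_eq_lintegral_of_nonneg_ae
      (ae_of_all _ fun ω => hnonneg (Z i ω) (W ω)) (hint_emp i).1]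
  have hStabAvg : (∫ ω, (n : ℝ)⁻¹ * ∑ i : Fin n,
        ‖A (fun j => Z j ω) (V ω)
          - A (Function.update (fun j => Z j ω) i (Z' i ω)) (V ω)‖ ^ 2 ∂ℙ)
      = (n : ℝ)⁻¹ * ∑ i, (Lstab i).toReal := by
    rw [integral_const_mul, integral_finset_sum _ fun i _ => hint_stab i]
    congr 1
    refine Finset.sum_congr rfl fun i _ => ?_
    rw [integral_eq_lintegral_of_nonneg_ae
      (ae_of_all _ fun ω => by positivity) (hint_stab i).1]
  rw [hPopEq, hEmpAvg, hStabAvg]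
  haveI : Nonempty {γ : ℝ // β < γ} := ⟨⟨β + 1, by linarith⟩⟩
  refine le_ciInf ?_
  rintro ⟨γ, hγ⟩
  dsimp only
  have hg0 : (0:ℝ) < γ - β := by linarith
  have hγ0 : (0:ℝ) < γ := by linarith
  have hc1pos : (0:ℝ) < 1 + 2 * β / (γ - β) := by positivity
  have hc2pos : (0:ℝ) < (β + γ) / 2 := by linarith
  -- pointwise bound
  have hpt : ∀ (i : Fin n) (ω : Ω), ℓ (Wi i ω) (Z i ω)
      ≤ (1 + 2 * β / (γ - β)) * ℓ (W ω) (Z i ω)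
        + ((β + γ) / 2) * ‖W ω - Wi i ω‖ ^ 2 := by
    intro i ω
    exact key_pointwise hβ hγ (fun w => hnonneg (Z i ω) w) (hdiff (Z i ω))
      (fun u v => hsmooth (Z i ω) u v) (W ω) (Wi i ω)
  -- the per-index ENNReal bound
  have hENN : ∀ i : Fin n, (∫⁻ ω, ∫⁻ z, φ (W ω) z ∂μ ∂ℙ)
      ≤ ENNReal.ofReal (1 + 2 * β / (γ - β)) * Lemp i
        + ENNReal.ofReal ((β + γ) / 2) * Lstab i := by
    intro i
    have mEmpω : Measurable fun ω => φ (W ω) (Z i ω) :=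
      hφmeas.comp (hWmeas.prodMk (hZmeas i))
    have mStabω : Measurable fun ω => ENNReal.ofReal (‖W ω - Wi i ω‖ ^ 2) :=
      ENNReal.measurable_ofReal.comp (((hWmeas.sub (hWimeas i)).norm).pow_const 2)
    rw [hkey i]
    have hb : ∀ ω, φ (Wi i ω) (Z i ω)
        ≤ ENNReal.ofReal (1 + 2 * β / (γ - β)) * φ (W ω) (Z i ω)
          + ENNReal.ofReal ((β + γ) / 2) * ENNReal.ofReal (‖W ω - Wi i ω‖ ^ 2) := by
      intro ω
      calc φ (Wi i ω) (Z i ω)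
          ≤ ENNReal.ofReal ((1 + 2 * β / (γ - β)) * ℓ (W ω) (Z i ω)
              + ((β + γ) / 2) * ‖W ω - Wi i ω‖ ^ 2) :=
            ENNReal.ofReal_le_ofReal (hpt i ω)
        _ = ENNReal.ofReal ((1 + 2 * β / (γ - β)) * ℓ (W ω) (Z i ω))
              + ENNReal.ofReal (((β + γ) / 2) * ‖W ω - Wi i ω‖ ^ 2) :=
            ENNReal.ofReal_add (mul_nonneg hc1pos.le (hnonneg _ _))
              (mul_nonneg hc2pos.le (by positivity))
        _ = _ := by
            rw [ENNReal.ofReal_mul hc1pos.le, ENNReal.ofReal_mul hc2pos.le]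
    calc (∫⁻ ω, φ (Wi i ω) (Z i ω) ∂ℙ)
        ≤ ∫⁻ ω, (ENNReal.ofReal (1 + 2 * β / (γ - β)) * φ (W ω) (Z i ω)
            + ENNReal.ofReal ((β + γ) / 2) * ENNReal.ofReal (‖W ω - Wi i ω‖ ^ 2)) ∂ℙ :=
          lintegral_mono hb
      _ = ENNReal.ofReal (1 + 2 * β / (γ - β)) * Lemp i
            + ENNReal.ofReal ((β + γ) / 2) * Lstab i := by
          rw [lintegral_add_left (mEmpω.const_mul _),
            lintegral_const_mul _ mEmpω, lintegral_const_mul _ mStabω]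
  -- averaging over i
  have hnE0 : ((n : ℝ≥0∞)) ≠ 0 := by
    exact_mod_cast Nat.cast_ne_zero.mpr hn.ne'
  have havg : (∫⁻ ω, ∫⁻ z, φ (W ω) z ∂μ ∂ℙ)
      ≤ (n : ℝ≥0∞)⁻¹ * ∑ i : Fin n, (ENNReal.ofReal (1 + 2 * β / (γ - β)) * Lemp i
          + ENNReal.ofReal ((β + γ) / 2) * Lstab i) := by
    have h1 : (∑ _i : Fin n, (∫⁻ ω, ∫⁻ z, φ (W ω) z ∂μ ∂ℙ))
        ≤ ∑ i : Fin n, (ENNReal.ofReal (1 + 2 * β / (γ - β)) * Lemp i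
            + ENNReal.ofReal ((β + γ) / 2) * Lstab i) :=
      Finset.sum_le_sum fun i _ => hENN i
    have h2 : (∑ _i : Fin n, (∫⁻ ω, ∫⁻ z, φ (W ω) z ∂μ ∂ℙ))
        = (n : ℝ≥0∞) * (∫⁻ ω, ∫⁻ z, φ (W ω) z ∂μ ∂ℙ) := by
      rw [Finset.sum_const, Finset.card_univ, Fintype.card_fin, nsmul_eq_mul]
    calc (∫⁻ ω, ∫⁻ z, φ (W ω) z ∂μ ∂ℙ)
        = (n : ℝ≥0∞)⁻¹ * ((n : ℝ≥0∞) * (∫⁻ ω, ∫⁻ z, φ (W ω) z ∂μ ∂ℙ)) := by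
          rw [← mul_assoc, ENNReal.inv_mul_cancel hnE0 (ENNReal.natCast_ne_top n), one_mul]
      _ ≤ (n : ℝ≥0∞)⁻¹ * ∑ i : Fin n, (ENNReal.ofReal (1 + 2 * β / (γ - β)) * Lemp i
            + ENNReal.ofReal ((β + γ) / 2) * Lstab i) := by
          rw [← h2]
          exact mul_le_mul_right h1 _
  have hRfin : ∀ i : Fin n, (ENNReal.ofReal (1 + 2 * β / (γ - β)) * Lemp i
      + ENNReal.ofReal ((β + γ) / 2) * Lstab i) ≠ ⊤ := fun i =>
    ENNReal.add_ne_top.mpr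
      ⟨ENNReal.mul_ne_top ENNReal.ofReal_ne_top (hLempfin i),
        ENNReal.mul_ne_top ENNReal.ofReal_ne_top (hLstabfin i)⟩
  have hRHSne : ((n : ℝ≥0∞)⁻¹ * ∑ i : Fin n, (ENNReal.ofReal (1 + 2 * β / (γ - β)) * Lemp i
      + ENNReal.ofReal ((β + γ) / 2) * Lstab i)) ≠ ⊤ := by
    refine ENNReal.mul_ne_top (ENNReal.inv_ne_top.mpr hnE0) ?_
    simp only [ne_eq, ENNReal.sum_eq_top, not_exists]
    intro i h
    exact hRfin i h.2
  have hfinal1 := ENNReal.toReal_mono hRHSne havg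
  have htoReal : ((n : ℝ≥0∞)⁻¹ * ∑ i : Fin n, (ENNReal.ofReal (1 + 2 * β / (γ - β)) * Lemp i
      + ENNReal.ofReal ((β + γ) / 2) * Lstab i)).toReal
      = (n : ℝ)⁻¹ * ∑ i : Fin n, ((1 + 2 * β / (γ - β)) * (Lemp i).toReal
          + ((β + γ) / 2) * (Lstab i).toReal) := by
    rw [ENNReal.toReal_mul, ENNReal.toReal_inv, ENNReal.toReal_natCast,
      ENNReal.toReal_sum (fun i _ => hRfin i)]
    congr 1
    refine Finset.sum_congr rfl fun i _ => ?_
    rw [ENNReal.toReal_add (ENNReal.mul_ne_top ENNReal.ofReal_ne_top (hLempfin i))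
      (ENNReal.mul_ne_top ENNReal.ofReal_ne_top (hLstabfin i)),
      ENNReal.toReal_mul, ENNReal.toReal_mul,
      ENNReal.toReal_ofReal hc1pos.le, ENNReal.toReal_ofReal hc2pos.le]
  rw [htoReal] at hfinal1
  -- final real arithmetic
  set Emp : ℝ := (n : ℝ)⁻¹ * ∑ i : Fin n, (Lemp i).toReal with hEmpdef
  set Stab : ℝ := (n : ℝ)⁻¹ * ∑ i : Fin n, (Lstab i).toReal with hStabdef
  have hEmp0 : 0 ≤ Emp := by
    rw [hEmpdef]
    exact mul_nonneg (by positivity) (Finset.sum_nonneg fun i _ => ENNReal.toReal_nonneg)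
  have hStab0 : 0 ≤ Stab := by
    rw [hStabdef]
    exact mul_nonneg (by positivity) (Finset.sum_nonneg fun i _ => ENNReal.toReal_nonneg)
  have hmain : (∫⁻ ω, ∫⁻ z, φ (W ω) z ∂μ ∂ℙ).toReal
      ≤ (1 + 2 * β / (γ - β)) * Emp + ((β + γ) / 2) * Stab := by
    refine hfinal1.trans_eq ?_
    rw [hEmpdef, hStabdef]
    rw [Finset.sum_add_distrib, ← Finset.mul_sum, ← Finset.mul_sum]
    ring
  have h1 : 1 - β / γ = (γ - β) / γ := by field_simp
  rw [h1, one_div_div]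
  have hexp : γ / (γ - β) * (2 * β / γ * Emp + (β + γ) / 2 * Stab)
      = 2 * β / (γ - β) * Emp + γ / (γ - β) * ((β + γ) / 2) * Stab := by
    field_simp
  rw [hexp]
  have hfrac : (β + γ) / 2 ≤ γ / (γ - β) * ((β + γ) / 2) := by
    have hge1 : (1:ℝ) ≤ γ / (γ - β) := by
      rw [le_div_iff₀ hg0]; linarith
    nlinarith
  have hc1expand : (1 + 2 * β / (γ - β)) * Emp = Emp + 2 * β / (γ - β) * Emp := by ring
  linarith [hmain, mul_le_mul_of_nonneg_right hfrac hStab0, hc1expand]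
end
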